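/- arXiv:2503.24275 — 5 statements merged into one kernel-verified Lean document; each statement's English description precedes it below -/
import Mathlib

section
/- For s = σ + it with σ, t real and s avoiding the poles of the relevant Gamma factors, the combination Ψ(1 − s̄/2) − Ψ(1 − s/2) − Ψ((1+s)/2) + Ψ((1+s̄)/2) equals −4i(1/2 − σ) t Σ_{n=1}^∞ 8(n − 1/4) / (|2n + s − 1|² |2n − s̄|²). -/
open Complex Filter Topology Finset

noncomputable def Complex.abs : AbsoluteValue ℂ ℝ := IsAbsoluteValue.toAbsoluteValue (norm : ℂ → ℝ)

lemma Complex.norm_eq_abs (z : ℂ) : ‖z‖ = Complex.abs z := rfl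

lemma Complex.abs_natCast (n : ℕ) : Complex.abs (n : ℂ) = n := by
  rw [← Complex.norm_eq_abs]; simp

lemma Complex.continuous_abs : Continuous Complex.abs := continuous_norm

lemma Complex.sq_abs (z : ℂ) : Complex.abs z ^ 2 = Complex.normSq z := Complex.sq_norm z

lemma abs_sub_abs_le (x y : ℂ) : Complex.abs x - Complex.abs y ≤ Complex.abs (x - y) := by
  simpa [Complex.norm_eq_abs] using norm_sub_norm_le x y

lemma lowbound (a : ℂ) (ha : ∀ n : ℕ, a ≠ -n) :
    ∃ r > (0:ℝ), ∃ ε > (0:ℝ), ∀ z ∈ Metric.closedBall a r, ∀ n : ℕ,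
      ε * (n + 1) ≤ Complex.abs (z + n) := by
  set A := Complex.abs a with hA
  set n₁ : ℕ := ⌈2 * (A + 1)⌉₊ + 1 with hn₁
  have hne : ∀ n : ℕ, a + n ≠ 0 := by
    intro n h
    exact ha n (by linear_combination h)
  have hpos : ∀ n : ℕ, 0 < Complex.abs (a + n) := fun n =>
    AbsoluteValue.pos _ (hne n)
  set δ : ℝ := (Finset.range n₁).inf' ⟨0, by simp [hn₁]⟩ (fun n => Complex.abs (a + n)) with hδ
  have hδpos : 0 < δ := by
    obtain ⟨i, _, he⟩ := Finset.exists_mem_eq_inf' (s := Finset.range n₁) ⟨0, by simp [hn₁]⟩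
      (fun n => Complex.abs (a + n))
    rw [hδ, he]
    exact hpos i
  have hδle : ∀ n < n₁, δ ≤ Complex.abs (a + n) := by
    intro n hn
    exact Finset.inf'_le _ (Finset.mem_range.2 hn)
  refine ⟨min 1 (δ/2), by positivity, min (δ/(2*(n₁+1))) (1/4), by positivity, ?_⟩
  intro z hz n
  have hza : Complex.abs (z - a) ≤ min 1 (δ/2) := by
    rw [Metric.mem_closedBall, dist_eq] at hz; exact hz
  have hza1 : Complex.abs (z - a) ≤ 1 := hza.trans (min_le_left _ _)
  have hza2 : Complex.abs (z - a) ≤ δ/2 := hza.trans (min_le_right _ _)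
  rcases lt_or_ge n n₁ with h | h
  · have key : Complex.abs (a + n) - Complex.abs (a - z) ≤ Complex.abs (z + n) := by
      have := abs_sub_abs_le (a + n) (a - z)
      have e : (a + n) - (a - z) = z + n := by ring
      rwa [e] at this
    have e2 : Complex.abs (a - z) = Complex.abs (z - a) := by
      rw [← AbsoluteValue.map_neg Complex.abs]; congr 1; ring
    have h1 : δ/2 ≤ Complex.abs (z + n) := by
      have h2 := hδle n h
      rw [e2] at key
      linarith
    have h2 : min (δ/(2*(n₁+1))) (1/4) * (n + 1) ≤ δ/2 := by
      have hm : min (δ/(2*(n₁+1))) (1/4) ≤ δ/(2*(n₁+1)) := min_le_left _ _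
      have hn' : (n:ℝ) + 1 ≤ (n₁:ℝ) + 1 := by
        have : (n:ℝ) ≤ n₁ := by exact_mod_cast h.le
        linarith
      calc min (δ/(2*(n₁+1))) (1/4) * (n + 1) ≤ (δ/(2*(n₁+1))) * ((n₁:ℝ)+1) := by
            apply mul_le_mul hm hn' (by positivity) (by positivity)
        _ = δ/2 := by field_simp
    linarith
  · have hzb : Complex.abs z ≤ A + 1 := by
      have := abs_sub_abs_le z a
      linarith
    have hn2 : 2 * (A + 1) ≤ (n:ℝ) := by
      have hc : 2 * (A+1) ≤ (⌈2 * (A + 1)⌉₊ : ℝ) := Nat.le_ceil _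
      have h2 : ((⌈2 * (A + 1)⌉₊ : ℕ) : ℝ) ≤ (n:ℝ) := by
        exact_mod_cast le_trans (by omega : ⌈2 * (A + 1)⌉₊ ≤ n₁) h
      linarith
    have h1 : (n:ℝ) - (A + 1) ≤ Complex.abs (z + n) := by
      have key := abs_sub_abs_le (n : ℂ) (-z)
      have e : (n:ℂ) - (-z) = z + n := by ring
      rw [e, AbsoluteValue.map_neg, Complex.abs_natCast] at key
      linarith
    have hn1 : (1:ℝ) ≤ (n:ℝ) := by
      have h0 : (1:ℕ) ≤ n := le_trans (by omega : (1:ℕ) ≤ n₁) h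
      exact_mod_cast h0
    have h2 : min (δ/(2*(n₁+1))) (1/4) * (n + 1) ≤ ((n:ℝ) + 1)/4 := by
      have := mul_le_mul (min_le_right (δ/(2*(n₁+1))) (1/4)) (le_refl ((n:ℝ)+1))
        (by positivity) (by norm_num)
      linarith
    have h3 : ((n:ℝ) + 1)/4 ≤ (n:ℝ) - (A + 1) := by nlinarith
    linarith

lemma prod_sub_one_le (F : Finset ℕ) (g : ℕ → ℂ) (w : ℕ → ℝ)
    (hb : ∀ i ∈ F, Complex.abs (g i - 1) ≤ w i) (hw : ∀ i ∈ F, 0 ≤ w i) :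
    Complex.abs (∏ i ∈ F, g i - 1) ≤ ∏ i ∈ F, (1 + w i) - 1 := by
  classical
  induction F using Finset.induction_on with
  | empty => simp
  | @insert i F hi ih =>
    have hbF : ∀ j ∈ F, Complex.abs (g j - 1) ≤ w j := fun j hj => hb j (mem_insert_of_mem hj)
    have hwF : ∀ j ∈ F, 0 ≤ w j := fun j hj => hw j (mem_insert_of_mem hj)
    have ihF := ih hbF hwF
    have hprodw : (1:ℝ) ≤ ∏ j ∈ F, (1 + w j) := by
      have := Finset.prod_le_prod (s := F) (f := fun _ => (1:ℝ)) (g := fun j => 1 + w j)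
        (by intros; norm_num) (fun j hj => by linarith [hwF j hj])
      simpa using this
    have hP : Complex.abs (∏ j ∈ F, g j) ≤ ∏ j ∈ F, (1 + w j) := by
      have := Complex.abs.add_le (∏ j ∈ F, g j - 1) 1
      simp only [sub_add_cancel, map_one] at this
      linarith
    rw [Finset.prod_insert hi, Finset.prod_insert hi]
    have key : g i * ∏ j ∈ F, g j - 1
        = (g i - 1) * ∏ j ∈ F, g j + (∏ j ∈ F, g j - 1) := by ring
    rw [key]
    calc Complex.abs _ ≤ Complex.abs ((g i - 1) * ∏ j ∈ F, g j)
          + Complex.abs (∏ j ∈ F, g j - 1) := Complex.abs.add_le _ _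
      _ = Complex.abs (g i - 1) * Complex.abs (∏ j ∈ F, g j)
          + Complex.abs (∏ j ∈ F, g j - 1) := by rw [map_mul]
      _ ≤ w i * ∏ j ∈ F, (1 + w j) + (∏ j ∈ F, (1 + w j) - 1) := by
          have h1 := hb i (mem_insert_self i F)
          have h2 := hw i (mem_insert_self i F)
          have := mul_le_mul h1 hP (AbsoluteValue.nonneg _ _) h2
          linarith
      _ = (1 + w i) * ∏ j ∈ F, (1 + w j) - 1 := by ring

lemma prod_abs_le (F : Finset ℕ) (g : ℕ → ℂ) (w : ℕ → ℝ)
    (hb : ∀ i ∈ F, Complex.abs (g i - 1) ≤ w i) (hw : ∀ i ∈ F, 0 ≤ w i) :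
    Complex.abs (∏ i ∈ F, g i) ≤ ∏ i ∈ F, (1 + w i) := by
  have h := prod_sub_one_le F g w hb hw
  have := Complex.abs.add_le (∏ i ∈ F, g i - 1) 1
  simp only [sub_add_cancel, map_one] at this
  linarith

lemma prod_one_add_le_exp (F : Finset ℕ) (w : ℕ → ℝ) (hw : ∀ i ∈ F, 0 ≤ w i) :
    ∏ i ∈ F, (1 + w i) ≤ Real.exp (∑ i ∈ F, w i) := by
  rw [Real.exp_sum]
  apply Finset.prod_le_prod (fun i hi => by linarith [hw i hi])
  intro i _
  linarith [Real.add_one_le_exp (w i)]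
lemma summable_aux (C E : ℝ) (hE : 0 < E) :
    Summable (fun n : ℕ => C / (E * ((n:ℝ)+1)^2)) := by
  have base : Summable (fun n : ℕ => 1 / ((n:ℝ)+1)^2) := by
    have h1 : Summable (fun n : ℕ => 1 / ((n:ℝ))^2) :=
      Real.summable_one_div_nat_pow.mpr (by norm_num)
    have h2 := (summable_nat_add_iff 1).mpr h1
    apply h2.congr
    intro n
    push_cast
    ring
  have := base.mul_left (C / E)
  apply this.congr
  intro n
  field_simp

lemma summable_diff (a b : ℂ) (ha : ∀ n : ℕ, a ≠ -n) (hb : ∀ n : ℕ, b ≠ -n) :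
    Summable (fun n : ℕ => 1/(b+(n:ℂ)) - 1/(a+(n:ℂ))) := by
  obtain ⟨r₁, hr₁, ε₁, hε₁, H₁⟩ := lowbound a ha
  obtain ⟨r₂, hr₂, ε₂, hε₂, H₂⟩ := lowbound b hb
  have Ha : ∀ n : ℕ, ε₁ * (n+1) ≤ Complex.abs (a + n) :=
    H₁ a (Metric.mem_closedBall_self hr₁.le)
  have Hb : ∀ n : ℕ, ε₂ * (n+1) ≤ Complex.abs (b + n) :=
    H₂ b (Metric.mem_closedBall_self hr₂.le)
  apply Summable.of_norm_bounded (summable_aux (Complex.abs (a - b)) (ε₁ * ε₂)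
    (by positivity))
  intro n
  have hane : a + (n:ℂ) ≠ 0 := by
    intro h; exact ha n (by linear_combination h)
  have hbne : b + (n:ℂ) ≠ 0 := by
    intro h; exact hb n (by linear_combination h)
  have key : 1/(b+(n:ℂ)) - 1/(a+(n:ℂ)) = (a - b)/((a+n)*(b+n)) := by
    rw [div_sub_div _ _ hbne hane,
      div_eq_div_iff (mul_ne_zero hbne hane) (mul_ne_zero hane hbne)]
    ring
  rw [key, Complex.norm_eq_abs, map_div₀, map_mul]
  apply div_le_div₀ (AbsoluteValue.nonneg _ _) le_rfl (by positivity) ?_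
  calc ε₁ * ε₂ * ((n:ℝ)+1)^2 = (ε₁ * ((n:ℝ)+1)) * (ε₂ * ((n:ℝ)+1)) := by ring
    _ ≤ Complex.abs (a+n) * Complex.abs (b+n) := by
        apply mul_le_mul (Ha n) (Hb n) (by positivity) (AbsoluteValue.nonneg _ _)

set_option maxHeartbeats 2000000 in
lemma digamma_diff (a b : ℂ) (ha : ∀ n : ℕ, a ≠ -n) (hb : ∀ n : ℕ, b ≠ -n) :
    deriv Complex.Gamma a / Complex.Gamma a - deriv Complex.Gamma b / Complex.Gamma b
      = ∑' n : ℕ, (1/(b+(n:ℂ)) - 1/(a+(n:ℂ))) := by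
  obtain ⟨r₁, hr₁, ε₁, hε₁, H₁⟩ := lowbound a ha
  obtain ⟨r₂, hr₂, ε₂, hε₂, H₂⟩ := lowbound b hb
  set r : ℝ := min r₁ r₂ with hrdef
  set ε : ℝ := min ε₁ ε₂ with hεdef
  have hr : 0 < r := lt_min hr₁ hr₂
  have hε : 0 < ε := lt_min hε₁ hε₂
  set c : ℂ := b - a with hcdef
  have hacb : a + c = b := by rw [hcdef]; ring
  set K : Set ℂ := Metric.closedBall a r with hKdef
  -- lower bounds on K
  have Hz : ∀ z ∈ K, ∀ n : ℕ, ε * (n+1) ≤ Complex.abs (z + n) := by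
    intro z hz n
    have : z ∈ Metric.closedBall a r₁ :=
      Metric.closedBall_subset_closedBall (min_le_left _ _) hz
    calc ε * (n+1) ≤ ε₁ * (n+1) := by
          apply mul_le_mul_of_nonneg_right (min_le_left _ _) (by positivity)
      _ ≤ _ := H₁ z this n
  have Hzc : ∀ z ∈ K, ∀ n : ℕ, ε * (n+1) ≤ Complex.abs (z + c + n) := by
    intro z hz n
    have hzc : z + c ∈ Metric.closedBall b r₂ := by
      rw [Metric.mem_closedBall] at hz ⊢
      have : dist (z + c) b = dist z a := by
        rw [dist_eq, dist_eq]
        congr 1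
        rw [hcdef]; ring
      rw [this]
      exact le_trans hz (min_le_right _ _)
    calc ε * (n+1) ≤ ε₂ * (n+1) := by
          apply mul_le_mul_of_nonneg_right (min_le_right _ _) (by positivity)
      _ ≤ _ := H₂ (z + c) hzc n
  have Hbn : ∀ n : ℕ, ε * (n+1) ≤ Complex.abs (b + n) := by
    intro n
    have := Hzc a (Metric.mem_closedBall_self hr.le) n
    rwa [hacb] at this
  have Han : ∀ n : ℕ, ε * (n+1) ≤ Complex.abs (a + n) :=
    Hz a (Metric.mem_closedBall_self hr.le)
  -- nonvanishing
  have hεn : ∀ n : ℕ, (0:ℝ) < ε * (n+1) := fun n => by positivity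
  have hzne : ∀ z ∈ K, ∀ n : ℕ, z + (n:ℂ) ≠ 0 := by
    intro z hz n h
    have := Hz z hz n
    rw [h] at this
    simp at this
    linarith [hεn n]
  have hzcne : ∀ z ∈ K, ∀ n : ℕ, z + c + (n:ℂ) ≠ 0 := by
    intro z hz n h
    have := Hzc z hz n
    rw [h] at this
    simp at this
    linarith [hεn n]
  have hbne : ∀ n : ℕ, b + (n:ℂ) ≠ 0 := by
    intro n h
    have := Hbn n
    rw [h] at this
    simp at this
    linarith [hεn n]
  have hane : ∀ n : ℕ, a + (n:ℂ) ≠ 0 := by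
    intro n h
    have := Han n
    rw [h] at this
    simp at this
    linarith [hεn n]
  -- the functions
  set v : ℕ → ℂ → ℂ := fun j z => ((z + c + j) * (a + j)) / ((z + j) * (b + j)) with hvdef
  set G : ℕ → ℂ → ℂ := fun N z => ∏ j ∈ Finset.range N, v j z with hGdef
  set SS : ℕ → ℂ → ℂ := fun N z => ∑ j ∈ Finset.range N, (1/(z + c + j) - 1/(z + j))
    with hSSdef
  set SL : ℂ → ℂ := fun z => ∑' n : ℕ, (1/(z + c + n) - 1/(z + n)) with hSLdef
  set f : ℂ → ℂ := fun z =>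
    Complex.Gamma z * Complex.Gamma b / (Complex.Gamma (z + c) * Complex.Gamma a) with hfdef
  set u : ℕ → ℝ := fun n => (Complex.abs c * r) / (ε^2 * ((n:ℝ)+1)^2) with hudef
  set u' : ℕ → ℝ := fun n => Complex.abs c / (ε^2 * ((n:ℝ)+1)^2) with hu'def
  have hu : Summable u := summable_aux _ _ (by positivity)
  have hu' : Summable u' := summable_aux _ _ (by positivity)
  have hunn : ∀ n, 0 ≤ u n := fun n => by
    rw [hudef]
    have := AbsoluteValue.nonneg Complex.abs c
    positivity
  have hu'nn : ∀ n, 0 ≤ u' n := fun n => by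
    rw [hu'def]
    have := AbsoluteValue.nonneg Complex.abs c
    positivity
  have hdenlb : ∀ z ∈ K, ∀ j : ℕ,
      ε^2 * ((j:ℝ)+1)^2 ≤ Complex.abs (z + j) * Complex.abs (z + c + j) := by
    intro z hz j
    calc ε^2 * ((j:ℝ)+1)^2 = (ε * ((j:ℝ)+1)) * (ε * ((j:ℝ)+1)) := by ring
      _ ≤ _ := mul_le_mul (Hz z hz j) (Hzc z hz j) (by positivity) (AbsoluteValue.nonneg _ _)
  have hdenlb2 : ∀ z ∈ K, ∀ j : ℕ,
      ε^2 * ((j:ℝ)+1)^2 ≤ Complex.abs (z + j) * Complex.abs (b + j) := by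
    intro z hz j
    calc ε^2 * ((j:ℝ)+1)^2 = (ε * ((j:ℝ)+1)) * (ε * ((j:ℝ)+1)) := by ring
      _ ≤ _ := mul_le_mul (Hz z hz j) (Hbn j) (by positivity) (AbsoluteValue.nonneg _ _)
  -- bound on v j z - 1
  have hvbound : ∀ j : ℕ, ∀ z ∈ K, Complex.abs (v j z - 1) ≤ u j := by
    intro j z hz
    have e : v j z - 1 = (c * (a - z)) / ((z + j) * (b + j)) := by
      rw [hvdef]
      rw [div_sub_one (mul_ne_zero (hzne z hz j) (hbne j))]
      congr 1
      rw [hacb.symm]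
      ring
    rw [e, map_div₀, map_mul, map_mul]
    have haz : Complex.abs (a - z) ≤ r := by
      rw [← AbsoluteValue.map_neg Complex.abs]
      simp only [neg_sub]
      rw [Metric.mem_closedBall, dist_eq] at hz
      exact hz
    rw [hudef]
    apply div_le_div₀ (by have := AbsoluteValue.nonneg Complex.abs c; positivity)
      (mul_le_mul le_rfl haz (AbsoluteValue.nonneg _ _) (AbsoluteValue.nonneg _ _))
      (by positivity) (hdenlb2 z hz j)
  -- bound on the sum terms
  have hsbound : ∀ j : ℕ, ∀ z ∈ K, ‖1/(z + c + j) - 1/(z + j)‖ ≤ u' j := by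
    intro j z hz
    have e : 1/(z + c + (j:ℂ)) - 1/(z + j) = (-c) / ((z + j) * (z + c + j)) := by
      have h1 := hzne z hz j
      have h2 := hzcne z hz j
      rw [div_sub_div _ _ h2 h1,
        div_eq_div_iff (mul_ne_zero h2 h1) (mul_ne_zero h1 h2)]
      ring
    rw [e, Complex.norm_eq_abs, map_div₀, map_mul, AbsoluteValue.map_neg]
    rw [hu'def]
    exact div_le_div₀ (by have := AbsoluteValue.nonneg Complex.abs c; positivity) le_rfl (by positivity) (hdenlb z hz j)
  -- uniform convergence of SS to SL on K
  have SA : TendstoUniformlyOn SS SL atTop K := by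
    have := tendstoUniformlyOn_tsum_nat hu' (f := fun j z => 1/(z + c + j) - 1/(z + j))
      (s := K) (fun j z hz => hsbound j z hz)
    exact this
  -- uniform bound on G
  set T : ℝ := ∑' n, u n with hTdef
  have hTnn : 0 ≤ T := tsum_nonneg hunn
  set C : ℝ := Real.exp T with hCdef
  have hC1 : 1 ≤ C := by
    rw [hCdef]
    calc (1:ℝ) = Real.exp 0 := by simp
      _ ≤ _ := Real.exp_le_exp.2 hTnn
  have habsG : ∀ N : ℕ, ∀ z ∈ K, Complex.abs (G N z) ≤ C := by
    intro N z hz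
    calc Complex.abs (G N z) ≤ ∏ j ∈ Finset.range N, (1 + u j) :=
          prod_abs_le _ _ _ (fun j _ => hvbound j z hz) (fun j _ => hunn j)
      _ ≤ Real.exp (∑ j ∈ Finset.range N, u j) :=
          prod_one_add_le_exp _ _ (fun j _ => hunn j)
      _ ≤ C := by
          rw [hCdef]
          apply Real.exp_le_exp.2
          exact Summable.sum_le_tsum _ (fun i _ => hunn i) hu
  -- uniform Cauchy
  have hcauchy : UniformCauchySeqOn G atTop K := by
    rw [Metric.uniformCauchySeqOn_iff]
    intro εp hεp
    have htail : Tendsto (fun m => ∑' k : ℕ, u (k + m)) atTop (𝓝 0) := tendsto_sum_nat_add u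
    have hofm : ∀ᶠ m in atTop, ∑' k : ℕ, u (k + m) < min 1 (εp / (C * Real.exp 1 + 1)) := by
      apply (htail.eventually (eventually_lt_nhds ?_))
      positivity
    obtain ⟨N₀, hN₀⟩ := eventually_atTop.1 hofm
    refine ⟨N₀, ?_⟩
    have key : ∀ m ≥ N₀, ∀ n, m ≤ n → ∀ z ∈ K, dist (G m z) (G n z) < εp := by
      intro m hm n hmn z hz
      have htailnn : (0:ℝ) ≤ ∑' k : ℕ, u (k + m) :=
        tsum_nonneg (fun k => hunn _)
      set Tm : ℝ := ∑' k : ℕ, u (k + m) with hTm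
      have hTm1 : Tm < 1 := lt_of_lt_of_le (hN₀ m hm) (min_le_left _ _)
      have hTm2 : Tm < εp / (C * Real.exp 1 + 1) := lt_of_lt_of_le (hN₀ m hm) (min_le_right _ _)
      have hsplit : G n z = G m z * ∏ j ∈ Finset.Ico m n, v j z := by
        rw [hGdef]
        simp only []
        rw [← Finset.prod_range_mul_prod_Ico _ hmn]
      have hIcobound : Complex.abs (∏ j ∈ Finset.Ico m n, v j z - 1)
          ≤ Real.exp Tm - 1 := by
        calc Complex.abs (∏ j ∈ Finset.Ico m n, v j z - 1)
            ≤ ∏ j ∈ Finset.Ico m n, (1 + u j) - 1 :=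
              prod_sub_one_le _ _ _ (fun j _ => hvbound j z hz) (fun j _ => hunn j)
          _ ≤ Real.exp (∑ j ∈ Finset.Ico m n, u j) - 1 := by
              linarith [prod_one_add_le_exp (Finset.Ico m n) u (fun j _ => hunn j)]
          _ ≤ Real.exp Tm - 1 := by
              have hsum : ∑ j ∈ Finset.Ico m n, u j ≤ Tm := by
                rw [Finset.sum_Ico_eq_sum_range]
                rw [hTm]
                have hsummable : Summable (fun k => u (k + m)) :=
                  (summable_nat_add_iff m).2 hu
                have := Summable.sum_le_tsum (Finset.range (n - m)) (fun i _ => hunn _) hsummable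
                apply le_trans _ this
                apply le_of_eq
                apply Finset.sum_congr rfl
                intro k _
                congr 1
                omega
              linarith [Real.exp_le_exp.2 hsum]
      have hexpbnd : Real.exp Tm - 1 ≤ Tm * Real.exp 1 := by
        have h1 : 1 - Tm ≤ Real.exp (-Tm) := by
          linarith [Real.add_one_le_exp (-Tm)]
        have h2 : Real.exp Tm * Real.exp (-Tm) = 1 := by
          rw [← Real.exp_add]; simp
        have h3 : Real.exp Tm ≤ Real.exp 1 := Real.exp_le_exp.2 hTm1.le
        nlinarith [Real.exp_pos Tm]
      have : dist (G m z) (G n z) ≤ C * (Tm * Real.exp 1) := by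
        rw [dist_eq, hsplit]
        have e : G m z - G m z * ∏ j ∈ Finset.Ico m n, v j z
            = -(G m z * (∏ j ∈ Finset.Ico m n, v j z - 1)) := by ring
        rw [e, Complex.norm_eq_abs, AbsoluteValue.map_neg, map_mul]
        calc Complex.abs (G m z) * Complex.abs (∏ j ∈ Finset.Ico m n, v j z - 1)
            ≤ C * (Real.exp Tm - 1) := by
              apply mul_le_mul (habsG m z hz) hIcobound (AbsoluteValue.nonneg _ _)
                (by linarith)
          _ ≤ C * (Tm * Real.exp 1) := by
              apply mul_le_mul_of_nonneg_left hexpbnd (by linarith)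
      calc dist (G m z) (G n z) ≤ C * (Tm * Real.exp 1) := this
        _ < εp := by
            have hCe : (0:ℝ) < C * Real.exp 1 + 1 := by positivity
            have hlt : Tm * (C * Real.exp 1 + 1) < εp := (lt_div_iff₀ hCe).1 hTm2
            nlinarith [htailnn]
    intro m hm n hn z hz
    rcases le_total m n with h | h
    · exact key m hm n h z hz
    · rw [dist_comm]
      exact key n hn m h z hz
  -- pointwise convergence of G to f
  have hGpt : ∀ z ∈ K, Tendsto (fun N => G N z) atTop (𝓝 (f z)) := by
    intro z hz
    have hzneq : ∀ m : ℕ, z ≠ -m := fun m h => hzne z hz m (by rw [h]; ring)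
    have hzcneq : ∀ m : ℕ, z + c ≠ -m := fun m h => hzcne z hz m (by rw [h]; ring)
    have hΓne : Complex.Gamma (z + c) * Complex.Gamma a ≠ 0 :=
      mul_ne_zero (Complex.Gamma_ne_zero hzcneq) (Complex.Gamma_ne_zero ha)
    have hlim : Tendsto (fun N => Complex.GammaSeq z N * Complex.GammaSeq b N /
        (Complex.GammaSeq (z+c) N * Complex.GammaSeq a N)) atTop (𝓝 (f z)) :=
      ((Complex.GammaSeq_tendsto_Gamma z).mul (Complex.GammaSeq_tendsto_Gamma b)).div
        (((Complex.GammaSeq_tendsto_Gamma (z+c)).mul (Complex.GammaSeq_tendsto_Gamma a))) hΓne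
    have key : ∀ N : ℕ, 1 ≤ N → G (N+1) z = Complex.GammaSeq z N * Complex.GammaSeq b N /
        (Complex.GammaSeq (z+c) N * Complex.GammaSeq a N) := by
      intro N hN
      have hN0 : (N:ℂ) ≠ 0 := Nat.cast_ne_zero.2 (by omega)
      have hfac : ((Nat.factorial N : ℕ):ℂ) ≠ 0 := Nat.cast_ne_zero.2 (Nat.factorial_ne_zero N)
      have hP1 : (∏ j ∈ Finset.range (N+1), (z + c + (j:ℂ))) ≠ 0 :=
        Finset.prod_ne_zero_iff.2 fun j _ => hzcne z hz j
      have hP2 : (∏ j ∈ Finset.range (N+1), (a + (j:ℂ))) ≠ 0 :=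
        Finset.prod_ne_zero_iff.2 fun j _ => hane j
      have hP3 : (∏ j ∈ Finset.range (N+1), (z + (j:ℂ))) ≠ 0 :=
        Finset.prod_ne_zero_iff.2 fun j _ => hzne z hz j
      have hP4 : (∏ j ∈ Finset.range (N+1), (b + (j:ℂ))) ≠ 0 :=
        Finset.prod_ne_zero_iff.2 fun j _ => hbne j
      have hpz : (N:ℂ)^(z:ℂ) ≠ 0 := by
        simp [Complex.cpow_eq_zero_iff, hN0]
      have hpb : (N:ℂ)^(b:ℂ) ≠ 0 := by
        simp [Complex.cpow_eq_zero_iff, hN0]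
      have hpzc : (N:ℂ)^(z+c) ≠ 0 := by
        simp [Complex.cpow_eq_zero_iff, hN0]
      have hpa : (N:ℂ)^(a:ℂ) ≠ 0 := by
        simp [Complex.cpow_eq_zero_iff, hN0]
      have hpow : (N:ℂ)^z * (N:ℂ)^b = (N:ℂ)^(z+c) * (N:ℂ)^a := by
        rw [← Complex.cpow_add _ _ hN0, ← Complex.cpow_add _ _ hN0]
        congr 1
        rw [hcdef]; ring
      have hG : G (N+1) z = (∏ j ∈ Finset.range (N+1), (z + c + (j:ℂ)))
          * (∏ j ∈ Finset.range (N+1), (a + (j:ℂ)))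
          / ((∏ j ∈ Finset.range (N+1), (z + (j:ℂ)))
          * (∏ j ∈ Finset.range (N+1), (b + (j:ℂ)))) := by
        rw [hGdef]
        simp only [hvdef]
        rw [Finset.prod_div_distrib, Finset.prod_mul_distrib, Finset.prod_mul_distrib]
      have hgs : ∀ w : ℂ, Complex.GammaSeq w N
          = (N:ℂ)^(w:ℂ) * (Nat.factorial N : ℕ) / ∏ j ∈ Finset.range (N+1), (w + (j:ℂ)) := fun w => rfl
      rw [hG, hgs z, hgs b, hgs (z+c), hgs a]
      have main : (N:ℂ)^(z:ℂ) * (Nat.factorial N : ℕ) / (∏ j ∈ Finset.range (N+1), (z + (j:ℂ)))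
            * ((N:ℂ)^(b:ℂ) * (Nat.factorial N : ℕ) / ∏ j ∈ Finset.range (N+1), (b + (j:ℂ)))
            / ((N:ℂ)^(z+c) * (Nat.factorial N : ℕ) / (∏ j ∈ Finset.range (N+1), (z + c + (j:ℂ)))
            * ((N:ℂ)^(a:ℂ) * (Nat.factorial N : ℕ) / ∏ j ∈ Finset.range (N+1), (a + (j:ℂ))))
          = ((∏ j ∈ Finset.range (N+1), (z + c + (j:ℂ)))
            * (∏ j ∈ Finset.range (N+1), (a + (j:ℂ)))
            / ((∏ j ∈ Finset.range (N+1), (z + (j:ℂ)))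
            * (∏ j ∈ Finset.range (N+1), (b + (j:ℂ)))))
            * (((N:ℂ)^(z:ℂ) * (N:ℂ)^(b:ℂ)) / ((N:ℂ)^(z+c) * (N:ℂ)^(a:ℂ))) := by
        field_simp
      rw [main, hpow, div_self (mul_ne_zero hpzc hpa), mul_one]
    have h1 : Tendsto (fun N => G (N+1) z) atTop (𝓝 (f z)) := by
      apply hlim.congr'
      filter_upwards [eventually_ge_atTop 1] with N hN
      exact (key N hN).symm
    exact (Filter.tendsto_add_atTop_iff_nat 1).1 h1
  -- derivative of G N
  have hder : ∀ N : ℕ, ∀ z ∈ K, HasDerivAt (G N) (G N z * SS N z) z := by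
    intro N z hz
    have hv : ∀ j ∈ Finset.range N, HasDerivAt (fun w => v j w)
        (v j z * (1/(z + c + j) - 1/(z + j))) z := by
      intro j _
      have hnum : HasDerivAt (fun w => (w + c + (j:ℂ)) * (a + j)) (a + (j:ℂ)) z := by
        have h0 : HasDerivAt (fun w : ℂ => w + c + (j:ℂ)) 1 z :=
          ((hasDerivAt_id z).add_const c).add_const _
        simpa using h0.mul_const (a + (j:ℂ))
      have hden : HasDerivAt (fun w => (w + (j:ℂ)) * (b + j)) (b + (j:ℂ)) z := by
        have h0 : HasDerivAt (fun w : ℂ => w + (j:ℂ)) 1 z := (hasDerivAt_id z).add_const _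
        simpa using h0.mul_const (b + (j:ℂ))
      have hdne : (z + (j:ℂ)) * (b + j) ≠ 0 := mul_ne_zero (hzne z hz j) (hbne j)
      have h := hnum.div hden hdne
      have e : ((a + (j:ℂ)) * ((z + j) * (b + j)) - (z + c + j) * (a + j) * (b + j)) /
          ((z + j) * (b + j))^2 = v j z * (1/(z + c + j) - 1/(z + j)) := by
        rw [hvdef]
        have h1 := hzne z hz j
        have h2 := hzcne z hz j
        have h3 := hbne j
        field_simp
      exact e ▸ h
    have h := HasDerivAt.fun_finsetProd hv
    have e : (∑ j ∈ Finset.range N, (∏ i ∈ (Finset.range N).erase j, v i z)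
        • (v j z * (1/(z + c + j) - 1/(z + j)))) = G N z * SS N z := by
      rw [hGdef, hSSdef]
      simp only [smul_eq_mul]
      rw [Finset.mul_sum]
      apply Finset.sum_congr rfl
      intro j hj
      rw [← mul_assoc, Finset.prod_erase_mul _ _ hj]
    rw [e] at h
    exact h
  -- uniform convergence of derivatives
  set O : Set ℂ := Metric.ball a r with hOdef
  have hOsub : O ⊆ K := Metric.ball_subset_closedBall
  have GU : TendstoUniformlyOn G f atTop K := hcauchy.tendstoUniformlyOn_of_tendsto hGpt
  have hfbound : ∀ z ∈ K, Complex.abs (f z) ≤ C := by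
    intro z hz
    have h1 : Tendsto (fun N => Complex.abs (G N z)) atTop (𝓝 (Complex.abs (f z))) :=
      (Complex.continuous_abs.tendsto _).comp (hGpt z hz)
    exact le_of_tendsto h1 (Eventually.of_forall fun N => habsG N z hz)
  set T' : ℝ := ∑' n, u' n with hT'def
  have hT'nn : 0 ≤ T' := tsum_nonneg hu'nn
  have hSSbound : ∀ N : ℕ, ∀ z ∈ K, Complex.abs (SS N z) ≤ T' := by
    intro N z hz
    rw [← Complex.norm_eq_abs]
    calc ‖SS N z‖ ≤ ∑ j ∈ Finset.range N, ‖1/(z + c + j) - 1/(z + j)‖ :=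
          norm_sum_le _ _
      _ ≤ ∑ j ∈ Finset.range N, u' j :=
          Finset.sum_le_sum (fun j _ => hsbound j z hz)
      _ ≤ T' := Summable.sum_le_tsum _ (fun i _ => hu'nn i) hu'
  have hDU : TendstoUniformlyOn (fun N z => G N z * SS N z) (fun z => f z * SL z) atTop O := by
    rw [Metric.tendstoUniformlyOn_iff]
    intro εp hεp
    set ρ : ℝ := εp / (2 * (C + T' + 1)) with hρdef
    have hρ : 0 < ρ := by
      rw [hρdef]
      have : (0:ℝ) < C := by linarith
      positivity
    have h1 := Metric.tendstoUniformlyOn_iff.1 GU ρ hρ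
    have h2 := Metric.tendstoUniformlyOn_iff.1 SA ρ hρ
    filter_upwards [h1, h2] with N hN1 hN2 z hz
    have hzK := hOsub hz
    have d1 : dist (f z) (G N z) < ρ := hN1 z hzK
    have d2 : dist (SL z) (SS N z) < ρ := hN2 z hzK
    have step : dist (f z * SL z) (G N z * SS N z)
        ≤ Complex.abs (f z) * dist (SL z) (SS N z)
          + dist (f z) (G N z) * Complex.abs (SS N z) := by
      rw [Complex.dist_eq, Complex.dist_eq, Complex.dist_eq]
      have e : f z * SL z - G N z * SS N z
          = f z * (SL z - SS N z) + (f z - G N z) * SS N z := by ring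
      rw [e]
      calc Complex.abs _ ≤ Complex.abs (f z * (SL z - SS N z))
            + Complex.abs ((f z - G N z) * SS N z) := Complex.abs.add_le _ _
        _ = _ := by rw [map_mul, map_mul]; rfl
    have hfin : Complex.abs (f z) * dist (SL z) (SS N z)
          + dist (f z) (G N z) * Complex.abs (SS N z) < εp := by
      have b1 : Complex.abs (f z) * dist (SL z) (SS N z) ≤ C * ρ := by
        apply mul_le_mul (hfbound z hzK) d2.le dist_nonneg (by linarith)
      have b2 : dist (f z) (G N z) * Complex.abs (SS N z) ≤ ρ * T' := by
        rcases eq_or_lt_of_le hT'nn with h | h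
        · have := hSSbound N z hzK
          have habs0 : Complex.abs (SS N z) = 0 := le_antisymm (by rw [← h] at this; exact this)
            (AbsoluteValue.nonneg _ _)
          rw [habs0, ← h]
          simp
        · apply mul_le_mul d1.le (hSSbound N z hzK) (AbsoluteValue.nonneg _ _) hρ.le
      have hCpos : (0:ℝ) < C := by linarith
      have : C * ρ + ρ * T' < εp := by
        have e1 : C * ρ + ρ * T' = (C + T') * ρ := by ring
        rw [e1, hρdef]
        calc (C + T') * (εp / (2*(C+T'+1)))
            < (2*(C+T'+1)) * (εp / (2*(C+T'+1))) := by
              apply mul_lt_mul_of_pos_right (by linarith) (by positivity)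
          _ = εp := by field_simp
      linarith
    exact lt_of_le_of_lt step hfin
  -- apply the uniform-limit derivative theorem
  have hmem : a ∈ O := Metric.mem_ball_self hr
  have hmain : HasDerivAt f (f a * SL a) a :=
    hasDerivAt_of_tendstoUniformlyOn Metric.isOpen_ball hDU
      (Eventually.of_forall (fun N z hz => hder N z (hOsub hz)))
      (fun z hz => hGpt z (hOsub hz)) hmem
  have hΓane := Complex.Gamma_ne_zero ha
  have hΓbne := Complex.Gamma_ne_zero hb
  have hfa : f a = 1 := by
    rw [hfdef]
    simp only [hacb]
    rw [mul_comm (Complex.Gamma a)]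
    exact div_self (mul_ne_zero hΓbne hΓane)
  rw [hfa, one_mul] at hmain
  -- the classical derivative of f
  have hΓa := (Complex.differentiableAt_Gamma a ha).hasDerivAt
  have hΓb := (Complex.differentiableAt_Gamma b hb).hasDerivAt
  have hcomp : HasDerivAt (fun z => Complex.Gamma (z + c)) (deriv Complex.Gamma b) a := by
    have h0 : HasDerivAt (fun z : ℂ => z + c) 1 a := (hasDerivAt_id a).add_const c
    have hb' : HasDerivAt Complex.Gamma (deriv Complex.Gamma b) (a + c) := by
      rw [hacb]; exact hΓb
    have := HasDerivAt.comp a hb' h0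
    rw [mul_one] at this
    exact this
  have hnum := hΓa.mul_const (Complex.Gamma b)
  have hden := hcomp.mul_const (Complex.Gamma a)
  have hdne : Complex.Gamma (a + c) * Complex.Gamma a ≠ 0 := by
    rw [hacb]; exact mul_ne_zero hΓbne hΓane
  have h2 : HasDerivAt f ((deriv Complex.Gamma a * Complex.Gamma b
      * (Complex.Gamma (a + c) * Complex.Gamma a)
      - Complex.Gamma a * Complex.Gamma b * (deriv Complex.Gamma b * Complex.Gamma a))
      / (Complex.Gamma (a + c) * Complex.Gamma a)^2) a := by
    have := hnum.div hden hdne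
    exact this
  have huniq := hmain.unique h2
  have hSLa : SL a = ∑' n : ℕ, (1/(b+(n:ℂ)) - 1/(a+(n:ℂ))) := by
    rw [hSLdef]
    apply tsum_congr
    intro n
    rw [hacb]
  rw [← hSLa, huniq, hacb]
  field_simp
lemma perterm_core (s w : ℂ) (n : ℕ)
    (hb1 : 1 - s / 2 + (n:ℂ) ≠ 0) (ha1 : 1 - w / 2 + (n:ℂ) ≠ 0)
    (hb2 : (1 + s) / 2 + (n:ℂ) ≠ 0) (ha2 : (1 + w) / 2 + (n:ℂ) ≠ 0) :
    (1/((1 - s/2) + (n:ℂ)) - 1/((1 - w/2) + (n:ℂ)))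
      + (1/(((1 + s)/2) + (n:ℂ)) - 1/(((1 + w)/2) + (n:ℂ)))
    = -(1-s-w)*(s-w) * (8*((n:ℂ)+1-1/4))
      / (((2*((n:ℂ)+1)+s-1)*(2*((n:ℂ)+1)+w-1)) * ((2*((n:ℂ)+1)-w)*(2*((n:ℂ)+1)-s))) := by
  have hw1 : (2*((n:ℂ)+1)+s-1) ≠ 0 := fun hh => hb2 (by linear_combination hh/2)
  have hw1' : (2*((n:ℂ)+1)+w-1) ≠ 0 := fun hh => ha2 (by linear_combination hh/2)
  have hw2 : (2*((n:ℂ)+1)-w) ≠ 0 := fun hh => ha1 (by linear_combination hh/2)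
  have hw2' : (2*((n:ℂ)+1)-s) ≠ 0 := fun hh => hb1 (by linear_combination hh/2)
  rw [div_sub_div 1 1 (by exact hb1) (by exact ha1),
    div_sub_div 1 1 (by exact hb2) (by exact ha2),
    div_add_div _ _ (mul_ne_zero hb1 ha1) (mul_ne_zero hb2 ha2),
    div_eq_div_iff
      (mul_ne_zero (mul_ne_zero hb1 ha1) (mul_ne_zero hb2 ha2))
      (mul_ne_zero (mul_ne_zero hw1 hw1') (mul_ne_zero hw2 hw2'))]
  ring

noncomputable def X (s : ℂ) : ℂ :=
  ((5 : ℂ) / Real.pi) ^ ((1 : ℂ)/2 - s) * Complex.Gamma (1 - s/2) / Complex.Gamma ((1 + s)/2)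

noncomputable def Ψ (z : ℂ) : ℂ := deriv Complex.Gamma z / Complex.Gamma z

set_option maxHeartbeats 2000000 in
theorem stmt_5 (σ t : ℝ) (s : ℂ) (hs : s = σ + t * I)
    (h1 : ∀ n : ℕ, 1 - s / 2 ≠ -n) (h2 : ∀ n : ℕ, 1 - (starRingEnd ℂ) s / 2 ≠ -n)
    (h3 : ∀ n : ℕ, (1 + s) / 2 ≠ -n) (h4 : ∀ n : ℕ, (1 + (starRingEnd ℂ) s) / 2 ≠ -n) :
    Ψ (1 - (starRingEnd ℂ) s / 2) - Ψ (1 - s / 2) - Ψ ((1 + s) / 2) + Ψ ((1 + (starRingEnd ℂ) s) / 2)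
      = -4 * I * (((1/2 - σ) * t : ℝ) : ℂ) *
        ((∑' n : ℕ, (8 * ((n : ℝ) + 1 - 1/4) /
          ((‖(2 * (n + 1) + s - 1 : ℂ)‖)^2 * (‖(2 * (n + 1) - (starRingEnd ℂ) s : ℂ)‖)^2)) : ℝ) : ℂ) := by
  simp only [Complex.norm_eq_abs]
  have key1 := digamma_diff (1 - (starRingEnd ℂ) s / 2) (1 - s / 2) h2 h1
  have key2 := digamma_diff ((1 + (starRingEnd ℂ) s) / 2) ((1 + s) / 2) h4 h3
  have sum1 := summable_diff (1 - (starRingEnd ℂ) s / 2) (1 - s / 2) h2 h1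
  have sum2 := summable_diff ((1 + (starRingEnd ℂ) s) / 2) ((1 + s) / 2) h4 h3
  have hLHS : Ψ (1 - (starRingEnd ℂ) s / 2) - Ψ (1 - s / 2) - Ψ ((1 + s) / 2)
      + Ψ ((1 + (starRingEnd ℂ) s) / 2)
      = (Ψ (1 - (starRingEnd ℂ) s / 2) - Ψ (1 - s / 2))
        + (Ψ ((1 + (starRingEnd ℂ) s) / 2) - Ψ ((1 + s) / 2)) := by ring
  rw [hLHS]
  have e1 : Ψ (1 - (starRingEnd ℂ) s / 2) - Ψ (1 - s / 2)
      = ∑' n : ℕ, (1/((1 - s/2) + (n:ℂ)) - 1/((1 - (starRingEnd ℂ) s / 2) + (n:ℂ))) := key1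
  have e2 : Ψ ((1 + (starRingEnd ℂ) s) / 2) - Ψ ((1 + s) / 2)
      = ∑' n : ℕ, (1/(((1 + s)/2) + (n:ℂ)) - 1/(((1 + (starRingEnd ℂ) s)/2) + (n:ℂ))) := key2
  rw [e1, e2, ← Summable.tsum_add sum1 sum2]
  have perterm : ∀ n : ℕ,
      (1/((1 - s/2) + (n:ℂ)) - 1/((1 - (starRingEnd ℂ) s / 2) + (n:ℂ)))
      + (1/(((1 + s)/2) + (n:ℂ)) - 1/(((1 + (starRingEnd ℂ) s)/2) + (n:ℂ)))
      = -4 * I * (((1/2 - σ) * t : ℝ) : ℂ) *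
        ((8 * ((n : ℝ) + 1 - 1/4) /
          ((Complex.abs (2 * (n + 1) + s - 1))^2
            * (Complex.abs (2 * (n + 1) - (starRingEnd ℂ) s))^2) : ℝ) : ℂ) := by
    intro n
    set w : ℂ := (starRingEnd ℂ) s with hwdef
    have hb1 : (1 - s/2) + (n:ℂ) ≠ 0 := fun hh => h1 n (by linear_combination hh)
    have ha1 : (1 - w/2) + (n:ℂ) ≠ 0 := fun hh => h2 n (by linear_combination hh)
    have hb2 : ((1 + s)/2) + (n:ℂ) ≠ 0 := fun hh => h3 n (by linear_combination hh)
    have ha2 : ((1 + w)/2) + (n:ℂ) ≠ 0 := fun hh => h4 n (by linear_combination hh)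
    have hw1 : (2 * ((n:ℂ) + 1) + s - 1) ≠ 0 := fun hh => hb2 (by linear_combination hh/2)
    have hw2 : (2 * ((n:ℂ) + 1) - w) ≠ 0 := fun hh => ha1 (by linear_combination hh/2)
    have hconj : w = (σ:ℂ) - t * I := by
      rw [hwdef, hs, map_add, map_mul, Complex.conj_ofReal, Complex.conj_ofReal, Complex.conj_I]
      ring
    have hconst : -4 * I * (((1/2 - σ) * t : ℝ) : ℂ) = -(1 - s - w) * (s - w) := by
      rw [hconj, hs]
      push_cast
      ring
    have habs1 : ((Complex.abs (2 * ((n:ℂ) + 1) + s - 1) : ℝ) : ℂ)^2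
        = (2 * ((n:ℂ) + 1) + s - 1) * (2 * ((n:ℂ) + 1) + w - 1) := by
      rw [← Complex.ofReal_pow, Complex.sq_abs, ← Complex.mul_conj]
      congr 1
      rw [hwdef]
      simp [map_ofNat]
    have habs2 : ((Complex.abs (2 * ((n:ℂ) + 1) - w) : ℝ) : ℂ)^2
        = (2 * ((n:ℂ) + 1) - w) * (2 * ((n:ℂ) + 1) - s) := by
      rw [← Complex.ofReal_pow, Complex.sq_abs, ← Complex.mul_conj]
      congr 1
      rw [hwdef]
      simp [map_ofNat]
    rw [hconst]
    push_cast
    rw [habs1, habs2, ← mul_div_assoc]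
    exact perterm_core s w n hb1 ha1 hb2 ha2
  calc ∑' n : ℕ, ((1/((1 - s/2) + (n:ℂ)) - 1/((1 - (starRingEnd ℂ) s / 2) + (n:ℂ)))
      + (1/(((1 + s)/2) + (n:ℂ)) - 1/(((1 + (starRingEnd ℂ) s)/2) + (n:ℂ))))
      = ∑' n : ℕ, (-4 * I * (((1/2 - σ) * t : ℝ) : ℂ) *
        ((8 * ((n : ℝ) + 1 - 1/4) /
          ((Complex.abs (2 * (n + 1) + s - 1))^2
            * (Complex.abs (2 * (n + 1) - (starRingEnd ℂ) s))^2) : ℝ) : ℂ)) :=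
        tsum_congr perterm
    _ = -4 * I * (((1/2 - σ) * t : ℝ) : ℂ) * ∑' n : ℕ,
        ((8 * ((n : ℝ) + 1 - 1/4) /
          ((Complex.abs (2 * (n + 1) + s - 1))^2
            * (Complex.abs (2 * (n + 1) - (starRingEnd ℂ) s))^2) : ℝ) : ℂ) := tsum_mul_left
    _ = _ := by rw [Complex.ofReal_tsum]
end

section
/- For σ < 1/2 and t > 0, with s = σ + it, the quantity i(Ψ(1 − s̄/2) − Ψ(1 − s/2) − Ψ((1+s)/2) + Ψ((1+s̄)/2)) is a positive real number. -/
open Complex Filter Topology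

namespace DigammaAux

lemma add_nat_ne_zero {z : ℂ} (hz : z.im ≠ 0) (k : ℕ) : z + k ≠ 0 := by
  intro h
  have : (z + (k : ℂ)).im = 0 := by rw [h]; simp
  simp at this
  exact hz this

lemma im_one_add_div (z : ℂ) (k : ℕ) : ((1 : ℂ) + z / k).im = z.im / k := by
  simp

lemma one_add_div_ne_zero {z : ℂ} (hz : z.im ≠ 0) {k : ℕ} (hk : k ≠ 0) :
    (1 : ℂ) + z / k ≠ 0 := by
  intro h
  have h1 : ((1 : ℂ) + z / k).im = 0 := by rw [h]; simp
  rw [im_one_add_div] at h1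
  exact hz (by
    have : (k : ℝ) ≠ 0 := Nat.cast_ne_zero.mpr hk
    field_simp at h1
    simpa using h1)

lemma norm_log_le (w : ℂ) : ‖Complex.log w‖ ≤ |Real.log ‖w‖| + Real.pi := by
  rw [Complex.log]
  refine (norm_add_le _ _).trans ?_
  gcongr
  · simp
  · rw [norm_mul]
    simp only [Complex.norm_I, mul_one, Complex.norm_real, Real.norm_eq_abs]
    exact Complex.abs_arg_le_pi w

lemma logDeriv_gammaSeq {z₀ : ℂ} (h : z₀.im ≠ 0) {n : ℕ} (hn : 1 ≤ n) :
    logDeriv (fun z => Complex.GammaSeq z n) z₀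
      = (Real.log n : ℂ) - ∑ k ∈ Finset.range (n + 1), (z₀ + k)⁻¹ := by
  have hn0 : (n:ℂ) ≠ 0 := Nat.cast_ne_zero.mpr (by omega)
  have hcp_ne : (n:ℂ)^z₀ ≠ 0 := by
    rw [Complex.cpow_def_of_ne_zero hn0]
    exact Complex.exp_ne_zero _
  have hfact : (n.factorial : ℂ) ≠ 0 := Nat.cast_ne_zero.mpr n.factorial_ne_zero
  have hprodne : (∏ j ∈ Finset.range (n+1), (z₀ + (j:ℂ))) ≠ 0 := by
    rw [Finset.prod_ne_zero_iff]
    exact fun j _ => add_nat_ne_zero h j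
  have hdnum : DifferentiableAt ℂ (fun z : ℂ => (n:ℂ)^z * (n.factorial : ℂ)) z₀ :=
    (differentiableAt_id.const_cpow (Or.inl hn0)).mul_const _
  have hdden : DifferentiableAt ℂ (fun z : ℂ => ∏ j ∈ Finset.range (n+1), (z + (j:ℂ))) z₀ :=
    DifferentiableAt.fun_finsetProd fun j _ => differentiableAt_id.add_const _
  have heq : (fun z => Complex.GammaSeq z n)
      = fun z => ((n:ℂ)^z * (n.factorial : ℂ)) / ∏ j ∈ Finset.range (n+1), (z + (j:ℂ)) := by
    funext w
    rw [Complex.GammaSeq]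
  rw [heq, logDeriv_div (f := fun z : ℂ => (n:ℂ)^z * (n.factorial : ℂ))
      (g := fun z : ℂ => ∏ j ∈ Finset.range (n+1), (z + (j:ℂ))) z₀
      (mul_ne_zero hcp_ne hfact) hprodne hdnum hdden,
    logDeriv_mul_const (f := fun z : ℂ => (n:ℂ)^z) z₀ _ hfact]
  have h1 : logDeriv (fun z : ℂ => (n:ℂ)^z) z₀ = Complex.log n := by
    rw [logDeriv_apply, (hasStrictDerivAt_const_cpow (Or.inl hn0)).hasDerivAt.deriv,
      mul_comm, mul_div_assoc, div_self hcp_ne, mul_one]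
  have h2 : logDeriv (fun z : ℂ => ∏ j ∈ Finset.range (n+1), (z + (j:ℂ))) z₀
      = ∑ j ∈ Finset.range (n+1), (z₀ + (j:ℂ))⁻¹ := by
    rw [logDeriv_prod (s := Finset.range (n+1)) (f := fun j z => z + (j:ℂ)) (x := z₀) (fun j _ => add_nat_ne_zero h j)
      (fun j _ => differentiableAt_id.add_const _)]
    refine Finset.sum_congr rfl fun j _ => ?_
    rw [logDeriv_apply, deriv_add_const, deriv_id'', one_div]
  rw [h1, h2, ← Complex.natCast_log]

set_option maxHeartbeats 2000000 in
lemma digamma_limit {z₀ : ℂ} (h : z₀.im ≠ 0) :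
    Tendsto (fun n : ℕ => (Real.log n : ℂ) - ∑ k ∈ Finset.range (n + 1), (z₀ + k)⁻¹)
      atTop (𝓝 (Ψ z₀)) := by
  classical
  set δ : ℝ := |z₀.im| / 2 with hδdef
  have hδ : 0 < δ := by positivity
  set S : Set ℂ := Metric.closedBall z₀ δ with hSdef
  have hS_im : ∀ z ∈ S, δ ≤ |z.im| := by
    intro z hz
    have h1 : |z.im - z₀.im| ≤ δ := by
      have h2 := Complex.abs_im_le_norm (z - z₀)
      rw [Complex.sub_im] at h2
      refine h2.trans ?_
      rwa [Metric.mem_closedBall, Complex.dist_eq] at hz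
    have h3 : |z₀.im| - |z.im| ≤ |z.im - z₀.im| := by
      rw [abs_sub_comm]
      exact abs_sub_abs_le_abs_sub _ _
    have : |z₀.im| = 2 * δ := by rw [hδdef]; ring
    linarith
  have hS_im' : ∀ z ∈ S, z.im ≠ 0 := fun z hz => by
    have := hS_im z hz; intro h0; rw [h0] at this; simp at this; linarith
  have hS_ne : ∀ z ∈ S, z ≠ 0 := fun z hz h0 => hS_im' z hz (by rw [h0]; simp)
  set R : ℝ := ‖z₀‖ + δ with hRdef
  have hR : 0 < R := by
    have := norm_nonneg z₀; rw [hRdef]; linarith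
  have hzR : ∀ z ∈ S, ‖z‖ ≤ R := by
    intro z hz
    calc ‖z‖ = ‖z₀ + (z - z₀)‖ := by ring_nf
    _ ≤ ‖z₀‖ + ‖z - z₀‖ := norm_add_le _ _
    _ ≤ R := by
        rw [hRdef]
        have : ‖z - z₀‖ ≤ δ := by rwa [Metric.mem_closedBall, Complex.dist_eq] at hz
        linarith
  set N : ℕ := max 1 ⌈2 * R⌉₊ with hNdef
  have hN1 : 1 ≤ N := le_max_left _ _
  have hNR : 2 * R ≤ N := by
    have : (⌈2 * R⌉₊ : ℝ) ≤ N := by exact_mod_cast Nat.cast_le.mpr (le_max_right _ _)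
    exact (Nat.le_ceil _).trans this
  set f : ℕ → ℂ → ℂ := fun k z => if k = 0 then 0 else z / k - Complex.log (1 + z / k) with hfdef
  set B : ℝ := R + (|Real.log (δ / N)| + Real.log (1 + R) + Real.pi) with hBdef
  have hB : 0 ≤ B := by
    have h1 : (0:ℝ) ≤ Real.log (1 + R) := Real.log_nonneg (by linarith)
    have := Real.pi_pos
    rw [hBdef]; positivity
  set u : ℕ → ℝ := fun k => if k ≤ N then B else R ^ 2 / (k : ℝ) ^ 2 with hudef
  have hfu : ∀ k z, z ∈ S → ‖f k z‖ ≤ u k := by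
    intro k z hz
    rcases eq_or_ne k 0 with rfl | hk0
    · simp only [hfdef, if_pos rfl, norm_zero, hudef, if_pos (Nat.zero_le N)]
      exact hB
    have hkpos : (0:ℝ) < k := by exact_mod_cast Nat.pos_of_ne_zero hk0
    have hznorm : ‖z / (k:ℂ)‖ ≤ R / k := by
      rw [norm_div, Complex.norm_natCast]
      gcongr
      exact hzR z hz
    have hk1 : (1:ℝ) ≤ k := by exact_mod_cast Nat.one_le_iff_ne_zero.mpr hk0
    have hRk : R / (k:ℝ) ≤ R := by
      rw [div_le_iff₀ hkpos]; nlinarith [hR.le]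
    have habs_ge : δ / k ≤ ‖1 + z / k‖ := by
      have h1 : |((1:ℂ) + z / k).im| ≤ ‖1 + z / k‖ := Complex.abs_im_le_norm _
      rw [im_one_add_div, abs_div, Nat.abs_cast] at h1
      refine le_trans ?_ h1
      gcongr
      exact hS_im z hz
    have habs_le : ‖1 + z / k‖ ≤ 1 + R := by
      calc ‖1 + z/k‖ ≤ ‖(1:ℂ)‖ + ‖z/k‖ := norm_add_le _ _
      _ ≤ 1 + R := by
          rw [norm_one]
          have h2 : ‖z/(k:ℂ)‖ ≤ R / k := hznorm
          linarith
    by_cases hkN : k ≤ N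
    · simp only [hudef, if_pos hkN, hfdef, if_neg hk0]
      calc ‖z/(k:ℂ) - Complex.log (1+z/(k:ℂ))‖
          ≤ ‖z/(k:ℂ)‖ + ‖Complex.log (1+z/(k:ℂ))‖ := norm_sub_le _ _
      _ ≤ R + (|Real.log (δ/N)| + Real.log (1+R) + Real.pi) := by
          have hb1 : ‖z/(k:ℂ)‖ ≤ R := hznorm.trans hRk
          have hb2 : ‖Complex.log (1+z/(k:ℂ))‖
              ≤ |Real.log (δ/N)| + Real.log (1+R) + Real.pi := by
            refine (norm_log_le _).trans ?_
            have key : |Real.log (‖1+z/(k:ℂ)‖)| ≤ |Real.log (δ/N)| + Real.log (1+R) := by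
              set x := ‖1+z/(k:ℂ)‖ with hxdef
              have hNpos : (0:ℝ) < N := by exact_mod_cast Nat.lt_of_lt_of_le Nat.zero_lt_one hN1
              have hx0 : 0 < x := lt_of_lt_of_le (by positivity) habs_ge
              rcases le_or_gt 1 x with hx1 | hx1
              · rw [_root_.abs_of_nonneg (Real.log_nonneg hx1)]
                have h3 := Real.log_le_log hx0 habs_le
                have h4 : (0:ℝ) ≤ |Real.log (δ/N)| := abs_nonneg _
                linarith
              · rw [_root_.abs_of_nonpos (Real.log_nonpos hx0.le hx1.le)]
                have hdN : δ / (N:ℝ) ≤ δ / k := by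
                  have hkN' : (k:ℝ) ≤ N := by exact_mod_cast hkN
                  gcongr
                have h4 : Real.log (δ/N) ≤ Real.log x :=
                  Real.log_le_log (by positivity) (hdN.trans habs_ge)
                have h5 : -Real.log (δ/N) ≤ |Real.log (δ/N)| := neg_le_abs _
                have h6 : (0:ℝ) ≤ Real.log (1+R) := Real.log_nonneg (by linarith)
                linarith
            linarith [key]
          linarith
    · push_neg at hkN
      simp only [hudef, if_neg (not_le.mpr hkN), hfdef, if_neg hk0]
      have hkR : 2 * R < k := lt_of_le_of_lt hNR (by exact_mod_cast hkN)
      have hw : ‖z / (k:ℂ)‖ ≤ 1/2 := by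
        refine hznorm.trans ?_
        rw [div_le_div_iff₀ hkpos two_pos]
        nlinarith
      have hw1 : ‖z / (k:ℂ)‖ < 1 := lt_of_le_of_lt hw (by norm_num)
      rw [norm_sub_rev]
      refine (Complex.norm_log_one_add_sub_self_le hw1).trans ?_
      have h7 : (1 - ‖z/(k:ℂ)‖)⁻¹ ≤ 2 := by
        have h8 : (1:ℝ)/2 ≤ 1 - ‖z/(k:ℂ)‖ := by linarith
        calc (1 - ‖z/(k:ℂ)‖)⁻¹ ≤ ((1:ℝ)/2)⁻¹ := by gcongr <;> norm_num
        _ = 2 := by norm_num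
      calc ‖z/(k:ℂ)‖^2 * (1-‖z/(k:ℂ)‖)⁻¹/2 ≤ ‖z/(k:ℂ)‖^2 * 2 / 2 := by gcongr
      _ = ‖z/(k:ℂ)‖^2 := by ring
      _ ≤ (R/(k:ℝ))^2 := by gcongr <;> first | exact norm_nonneg _ | exact hznorm
      _ = R^2/(k:ℝ)^2 := by rw [div_pow]
  have hu : Summable u := by
    rw [← summable_nat_add_iff (N+1)]
    have base : Summable (fun k : ℕ => R^2 / ((k:ℝ)+(N+1))^2) := by
      have b0 : Summable (fun k : ℕ => 1 / ((k:ℝ))^2) :=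
        Real.summable_one_div_nat_pow.mpr one_lt_two
      have b1 := (summable_nat_add_iff (N+1)).mpr b0
      have b2 := b1.mul_left (R^2)
      refine b2.congr fun n => ?_
      push_cast
      field_simp
    refine base.congr fun n => ?_
    have hn : ¬ (n + (N+1) ≤ N) := by omega
    simp only [hudef, if_neg hn]
    push_cast
    ring_nf
  have hsum : TendstoUniformlyOn (fun (n : ℕ) z => ∑ k ∈ Finset.range (n + 1), f k z)
      (fun z => ∑' k, f k z) atTop S := by
    intro v hv
    exact (tendsto_add_atTop_nat 1).eventually (tendstoUniformlyOn_tsum_nat hu hfu v hv)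
  have hγ : Tendsto (fun n : ℕ => Real.log n - (harmonic n : ℝ)) atTop
      (𝓝 (-Real.eulerMascheroniConstant)) := by
    have := Real.tendsto_harmonic_sub_log.neg
    simpa [neg_sub] using this
  have hTU2 : TendstoUniformlyOn
      (fun (n : ℕ) (z : ℂ) => z * ((Real.log n - (harmonic n : ℝ) : ℝ) : ℂ))
      (fun z => z * ((-Real.eulerMascheroniConstant : ℝ) : ℂ)) atTop S := by
    rw [Metric.tendstoUniformlyOn_iff]
    intro ε hε
    filter_upwards [Metric.tendsto_nhds.mp hγ (ε / R) (by positivity)] with n hn z hz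
    have hd : dist (Real.log n - (harmonic n : ℝ)) (-Real.eulerMascheroniConstant) < ε / R := hn
    rw [Complex.dist_eq]
    have : z * ((-Real.eulerMascheroniConstant : ℝ) : ℂ)
        - z * ((Real.log n - (harmonic n : ℝ) : ℝ) : ℂ)
        = z * (((-Real.eulerMascheroniConstant - (Real.log n - (harmonic n : ℝ)) : ℝ)) : ℂ) := by
      push_cast; ring
    rw [this, norm_mul, Complex.norm_real, Real.norm_eq_abs]
    have h1 : ‖z‖ ≤ R := hzR z hz
    have h2 : |(-Real.eulerMascheroniConstant - (Real.log n - (harmonic n : ℝ)) : ℝ)| < ε / R := by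
      rw [Real.dist_eq, abs_sub_comm] at hd
      convert hd using 2
    calc ‖z‖ * |(-Real.eulerMascheroniConstant - (Real.log n - (harmonic n : ℝ)) : ℝ)|
        ≤ R * |(-Real.eulerMascheroniConstant - (Real.log n - (harmonic n : ℝ)) : ℝ)| := by
          gcongr
      _ < R * (ε / R) := by gcongr
      _ = ε := by field_simp
  set G : ℕ → ℂ → ℂ := fun n z => z * ((Real.log n - (harmonic n : ℝ) : ℝ) : ℂ)
      + ∑ k ∈ Finset.range (n + 1), f k z with hGdef
  set g : ℂ → ℂ := fun z => z * ((-Real.eulerMascheroniConstant : ℝ) : ℂ) + ∑' k, f k z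
    with hgdef
  have hTUG : TendstoUniformlyOn G g atTop S := hTU2.add hsum
  have hGid : ∀ n : ℕ, 1 ≤ n → ∀ z ∈ S, Complex.GammaSeq z n = Complex.exp (G n z) / z := by
    intro n hn z hz
    have him : z.im ≠ 0 := hS_im' z hz
    have hz0 : z ≠ 0 := hS_ne z hz
    have hsum_eq : ∑ k ∈ Finset.range (n+1), f k z
        = ∑ k ∈ Finset.range n, (z/((k:ℂ)+1) - Complex.log (1 + z/((k:ℂ)+1))) := by
      rw [Finset.sum_range_succ']
      have e0 : f 0 z = 0 := by simp [hfdef]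
      have e1 : ∀ k : ℕ, f (k+1) z = z/((k:ℂ)+1) - Complex.log (1 + z/((k:ℂ)+1)) := by
        intro k
        simp only [hfdef, if_neg (Nat.succ_ne_zero k)]
        push_cast
        ring_nf
      simp only [e0, e1, add_zero]
    have hharm : (((harmonic n : ℝ)) : ℂ) = ∑ k ∈ Finset.range n, ((k:ℂ)+1)⁻¹ := by
      rw [harmonic]
      push_cast
      rfl
    have hG : G n z = z * (Real.log n : ℂ)
        - ∑ k ∈ Finset.range n, Complex.log (1 + z/((k:ℂ)+1)) := by
      have e1 : ((Real.log n - (harmonic n : ℝ) : ℝ) : ℂ)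
          = (Real.log n : ℂ) - (((harmonic n : ℝ)) : ℂ) := by push_cast; ring
      simp only [hGdef]
      rw [hsum_eq, e1, Finset.sum_sub_distrib, mul_sub]
      have e2 : z * (((harmonic n : ℝ)) : ℂ) = ∑ k ∈ Finset.range n, z/((k:ℂ)+1) := by
        rw [hharm, Finset.mul_sum]
        exact Finset.sum_congr rfl fun k _ => (div_eq_mul_inv z _).symm
      rw [e2]
      ring
    have hone_ne : ∀ k : ℕ, ((1:ℂ) + z/((k:ℂ)+1)) ≠ 0 := by
      intro k
      have := one_add_div_ne_zero him (Nat.succ_ne_zero k)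
      push_cast at this
      exact this
    have hexp : Complex.exp (G n z)
        = (n:ℂ)^z / ∏ k ∈ Finset.range n, ((1:ℂ) + z/((k:ℂ)+1)) := by
      rw [hG, Complex.exp_sub]
      congr 1
      · rw [Complex.cpow_def_of_ne_zero (Nat.cast_ne_zero.mpr (by omega) : (n:ℂ) ≠ 0)]
        rw [← Complex.natCast_log, mul_comm]
      · rw [Complex.exp_sum]
        exact Finset.prod_congr rfl fun k _ => Complex.exp_log (hone_ne k)
    have hfact : ((n.factorial : ℕ) : ℂ) ≠ 0 := Nat.cast_ne_zero.mpr n.factorial_ne_zero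
    have hprodne : (∏ k ∈ Finset.range n, ((1:ℂ) + z/((k:ℂ)+1))) ≠ 0 := by
      rw [Finset.prod_ne_zero_iff]
      exact fun k _ => hone_ne k
    have hprod : (∏ k ∈ Finset.range n, ((1:ℂ) + z/((k:ℂ)+1))) * (n.factorial : ℂ)
        = ∏ k ∈ Finset.range n, (z + ((k:ℂ)+1)) := by
      have e3 : ((n.factorial : ℕ) : ℂ) = ∏ k ∈ Finset.range n, ((k:ℂ)+1) := by
        rw [← Finset.prod_range_add_one_eq_factorial]
        push_cast
        rfl
      rw [e3, ← Finset.prod_mul_distrib]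
      refine Finset.prod_congr rfl fun k _ => ?_
      have hk1 : ((k:ℂ)+1) ≠ 0 := by
        have h5 : ((k+1:ℕ):ℂ) ≠ 0 := Nat.cast_ne_zero.mpr (Nat.succ_ne_zero k)
        push_cast at h5
        exact h5
      field_simp
      ring
    have hprod2 : ∏ j ∈ Finset.range (n+1), (z + (j:ℂ))
        = z * ∏ k ∈ Finset.range n, (z + ((k:ℂ)+1)) := by
      rw [Finset.prod_range_succ']
      push_cast
      simp [mul_comm]
    rw [Complex.GammaSeq, hexp, hprod2, ← hprod]
    field_simp
  have hg_eq : ∀ z ∈ S, Complex.Gamma z = Complex.exp (g z) / z := by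
    intro z hz
    have h1 : Tendsto (fun n => Complex.exp (G n z) / z) atTop (𝓝 (Complex.exp (g z) / z)) :=
      ((Complex.continuous_exp.tendsto _).comp (hTUG.tendsto_at hz)).div_const z
    refine tendsto_nhds_unique ((Complex.GammaSeq_tendsto_Gamma z).congr' ?_) h1
    filter_upwards [eventually_ge_atTop 1] with n hn using hGid n hn z hz
  have hGcont : ∀ n : ℕ, ContinuousOn (G n) S := by
    intro n
    apply ContinuousOn.add
    · exact (continuous_id.mul continuous_const).continuousOn
    · apply continuousOn_finset_sum
      intro k _
      rcases eq_or_ne k 0 with rfl|hk0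
      · simpa [hfdef] using continuousOn_const
      · simp only [hfdef, if_neg hk0]
        apply ContinuousOn.sub
        · exact (continuous_id.div_const _).continuousOn
        · intro w hw
          have him := hS_im' w hw
          have hmem : ((1:ℂ) + w/(k:ℂ)) ∈ Complex.slitPlane := by
            refine Complex.mem_slitPlane_iff.mpr (Or.inr ?_)
            rw [im_one_add_div]
            exact div_ne_zero him (Nat.cast_ne_zero.mpr hk0)
          exact (((continuous_const.add (continuous_id.div_const _)).continuousAt).clog
            hmem).continuousWithinAt
  obtain ⟨M, hM⟩ := (isCompact_closedBall z₀ δ).exists_bound_of_continuousOn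
    (hTUG.continuousOn (Eventually.of_forall hGcont).frequently)
  have hTUexp : TendstoUniformlyOn (fun n z => Complex.exp (G n z))
      (fun z => Complex.exp (g z)) atTop S := by
    rw [Metric.tendstoUniformlyOn_iff]
    intro ε hε
    have hK : IsCompact (Metric.closedBall (0:ℂ) (M+1)) := isCompact_closedBall _ _
    have hUC := hK.uniformContinuousOn_of_continuous Complex.continuous_exp.continuousOn
    rw [Metric.uniformContinuousOn_iff] at hUC
    obtain ⟨η, hη, hη'⟩ := hUC ε hε
    filter_upwards [Metric.tendstoUniformlyOn_iff.mp hTUG (min η 1) (lt_min hη one_pos)]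
      with n hn z hz
    have h1 : dist (g z) (G n z) < min η 1 := hn z hz
    have hMz : ‖g z‖ ≤ M := hM z hz
    have hM0 : 0 ≤ M := le_trans (norm_nonneg _) hMz
    have hgz : g z ∈ Metric.closedBall (0:ℂ) (M+1) := by
      rw [Metric.mem_closedBall, dist_zero_right]
      linarith
    have hGz : G n z ∈ Metric.closedBall (0:ℂ) (M+1) := by
      rw [Metric.mem_closedBall, dist_zero_right]
      have : ‖G n z‖ ≤ ‖g z‖ + dist (g z) (G n z) := by
        rw [dist_comm, dist_eq_norm]
        have := norm_sub_norm_le (G n z) (g z)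
        linarith [norm_sub_norm_le (G n z) (g z)]
      have h2 : dist (g z) (G n z) ≤ 1 := le_of_lt (lt_of_lt_of_le h1 (min_le_right _ _))
      linarith
    exact hη' _ hgz _ hGz (lt_of_lt_of_le h1 (min_le_left _ _))
  have hTUdiv : TendstoUniformlyOn (fun n z => Complex.exp (G n z) / z)
      (fun z => Complex.exp (g z) / z) atTop S := by
    rw [Metric.tendstoUniformlyOn_iff] at hTUexp ⊢
    intro ε hε
    filter_upwards [hTUexp (ε * δ) (by positivity)] with n hn z hz
    have hδz : δ ≤ ‖z‖ := le_trans (hS_im z hz) (Complex.abs_im_le_norm z)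
    have hz0 : z ≠ 0 := hS_ne z hz
    have hn' := hn z hz
    rw [Complex.dist_eq] at hn'
    rw [Complex.dist_eq, div_sub_div_same, norm_div]
    calc ‖Complex.exp (g z) - Complex.exp (G n z)‖ / ‖z‖
        ≤ ‖Complex.exp (g z) - Complex.exp (G n z)‖ / δ := by
          gcongr
      _ < (ε * δ) / δ := by
          gcongr
      _ = ε := by field_simp
  have hTUfinal : TendstoUniformlyOn (fun n z => Complex.GammaSeq z n) Complex.Gamma atTop S := by
    refine (hTUdiv.congr ?_).congr_right ?_
    · filter_upwards [eventually_ge_atTop 1] with n hn z hz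
      exact (hGid n hn z hz).symm
    · intro z hz
      exact (hg_eq z hz).symm
  have hTLU : TendstoLocallyUniformlyOn (fun n z => Complex.GammaSeq z n) Complex.Gamma atTop
      (Metric.ball z₀ δ) :=
    (hTUfinal.mono Metric.ball_subset_closedBall).tendstoLocallyUniformlyOn
  have hdiff : ∀ᶠ n : ℕ in atTop, DifferentiableOn ℂ (fun z => Complex.GammaSeq z n)
      (Metric.ball z₀ δ) := by
    filter_upwards [eventually_ge_atTop 1] with n hn
    intro z hz
    have hzS : z ∈ S := Metric.ball_subset_closedBall hz
    have him := hS_im' z hzS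
    have hn0 : (n:ℂ) ≠ 0 := Nat.cast_ne_zero.mpr (by omega)
    apply DifferentiableAt.differentiableWithinAt
    have heq : (fun z => Complex.GammaSeq z n)
        = fun z => ((n:ℂ)^z * (n.factorial : ℂ)) / ∏ j ∈ Finset.range (n+1), (z + (j:ℂ)) := by
      funext w
      rw [Complex.GammaSeq]
    rw [heq]
    apply DifferentiableAt.div
    · exact (differentiableAt_id.const_cpow (Or.inl hn0)).mul_const _
    · exact DifferentiableAt.fun_finsetProd fun j _ => (differentiableAt_id.add_const _)
    · rw [Finset.prod_ne_zero_iff]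
      exact fun j _ => add_nat_ne_zero him j
  have hΓ : Complex.Gamma z₀ ≠ 0 := Complex.Gamma_ne_zero fun m hm => h (by rw [hm]; simp)
  have hlog := Complex.logDeriv_tendsto (f := fun n z => Complex.GammaSeq z n) (g := Complex.Gamma)
    Metric.isOpen_ball (Metric.mem_ball_self hδ) hTLU hdiff hΓ
  refine Tendsto.congr' ?_ hlog
  filter_upwards [eventually_ge_atTop 1] with n hn
  exact logDeriv_gammaSeq h hn

end DigammaAux

lemma I_mul_inv_sub_inv_conj (w : ℂ) :
    I * (w⁻¹ - ((starRingEnd ℂ) w)⁻¹) = ((2 * w.im / Complex.normSq w : ℝ) : ℂ) := by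
  rw [← map_inv₀, Complex.sub_conj, Complex.inv_im]
  have hI : Complex.I * Complex.I = -1 := Complex.I_mul_I
  push_cast
  rw [mul_comm Complex.I, mul_assoc, hI]
  field_simp

theorem stmt_6 (σ t : ℝ) (hσ : σ < 1/2) (ht : 0 < t) (s : ℂ) (hs : s = σ + t * I) :
    ∃ r : ℝ, 0 < r ∧
      I * (Ψ (1 - (starRingEnd ℂ) s / 2) - Ψ (1 - s / 2) - Ψ ((1 + s) / 2)
        + Ψ ((1 + (starRingEnd ℂ) s) / 2)) = r := by
  have hconj : (starRingEnd ℂ) s = (σ:ℂ) - t * I := by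
    rw [hs]
    simp [map_add, map_mul, Complex.conj_ofReal, Complex.conj_I]
    ring
  set p1 : ℂ := 1 - (starRingEnd ℂ) s / 2 with hp1
  set p2 : ℂ := 1 - s / 2 with hp2
  set p3 : ℂ := (1 + s) / 2 with hp3
  set p4 : ℂ := (1 + (starRingEnd ℂ) s) / 2 with hp4
  have h1im : p1.im = t / 2 := by
    rw [hp1, hconj]; simp; ring
  have h2im : p2.im = -(t / 2) := by
    rw [hp2, hs]; simp
  have h3im : p3.im = t / 2 := by
    rw [hp3, hs]; simp
  have h4im : p4.im = -(t / 2) := by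
    rw [hp4, hconj]; simp; ring
  have h2re : p2.re = 1 - σ / 2 := by
    rw [hp2, hs]; simp
  have h3re : p3.re = (1 + σ) / 2 := by
    rw [hp3, hs]; simp
  have hc2 : (starRingEnd ℂ) p2 = p1 := by
    rw [hp1, hp2]
    simp [map_sub, map_div₀, map_ofNat]
  have hc3 : (starRingEnd ℂ) p3 = p4 := by
    rw [hp3, hp4]
    simp [map_add, map_div₀, map_ofNat]
  have ht2 : (0:ℝ) < t / 2 := by linarith
  have T1 := DigammaAux.digamma_limit (z₀ := p1) (by rw [h1im]; exact ne_of_gt ht2)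
  have T2 := DigammaAux.digamma_limit (z₀ := p2) (by rw [h2im]; exact neg_ne_zero.mpr (ne_of_gt ht2))
  have T3 := DigammaAux.digamma_limit (z₀ := p3) (by rw [h3im]; exact ne_of_gt ht2)
  have T4 := DigammaAux.digamma_limit (z₀ := p4) (by rw [h4im]; exact neg_ne_zero.mpr (ne_of_gt ht2))
  have hX := ((T1.sub T2).sub T3).add T4
  have hXc := hX.const_mul Complex.I
  set e : ℕ → ℝ := fun k => t / Complex.normSq (p3 + k) - t / Complex.normSq (p2 + k) with he
  have hnsq2pos : ∀ k : ℕ, 0 < Complex.normSq (p2 + k) := fun k =>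
    Complex.normSq_pos.mpr (DigammaAux.add_nat_ne_zero (by rw [h2im]; exact neg_ne_zero.mpr (ne_of_gt ht2)) k)
  have hnsq3pos : ∀ k : ℕ, 0 < Complex.normSq (p3 + k) := fun k =>
    Complex.normSq_pos.mpr (DigammaAux.add_nat_ne_zero (by rw [h3im]; exact ne_of_gt ht2) k)
  have hnsqlt : ∀ k : ℕ, Complex.normSq (p3 + k) < Complex.normSq (p2 + k) := by
    intro k
    have hk0 : (0:ℝ) ≤ (k:ℝ) := Nat.cast_nonneg k
    rw [Complex.normSq_apply, Complex.normSq_apply]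
    simp only [Complex.add_re, Complex.add_im, Complex.natCast_re, Complex.natCast_im,
      h2im, h3im, h2re, h3re, add_zero]
    nlinarith
  have hepos : ∀ k : ℕ, 0 < e k := by
    intro k
    rw [he]
    have := div_lt_div_of_pos_left ht (hnsq3pos k) (hnsqlt k)
    linarith
  have hkey : ∀ n : ℕ,
      Complex.I * (((Real.log n : ℂ) - ∑ k ∈ Finset.range (n+1), (p1 + k)⁻¹)
        - ((Real.log n : ℂ) - ∑ k ∈ Finset.range (n+1), (p2 + k)⁻¹)
        - ((Real.log n : ℂ) - ∑ k ∈ Finset.range (n+1), (p3 + k)⁻¹)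
        + ((Real.log n : ℂ) - ∑ k ∈ Finset.range (n+1), (p4 + k)⁻¹))
      = ((∑ k ∈ Finset.range (n+1), e k : ℝ) : ℂ) := by
    intro n
    have hterm : ∀ k : ℕ,
        Complex.I * ((p2 + k)⁻¹ + (p3 + k)⁻¹ - (p1 + k)⁻¹ - (p4 + k)⁻¹) = ((e k : ℝ) : ℂ) := by
      intro k
      have hcc2 : (starRingEnd ℂ) (p2 + k) = p1 + k := by
        rw [map_add, hc2, Complex.conj_natCast]
      have hcc3 : (starRingEnd ℂ) (p3 + k) = p4 + k := by
        rw [map_add, hc3, Complex.conj_natCast]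
      have e2 := I_mul_inv_sub_inv_conj (p2 + k)
      have e3 := I_mul_inv_sub_inv_conj (p3 + k)
      rw [hcc2] at e2
      rw [hcc3] at e3
      have him2 : (p2 + (k:ℂ)).im = -(t/2) := by simp [h2im]
      have him3 : (p3 + (k:ℂ)).im = t/2 := by simp [h3im]
      rw [him2] at e2
      rw [him3] at e3
      have : Complex.I * ((p2 + k)⁻¹ + (p3 + k)⁻¹ - (p1 + k)⁻¹ - (p4 + k)⁻¹)
          = Complex.I * ((p2 + k)⁻¹ - (p1 + k)⁻¹) + Complex.I * ((p3 + k)⁻¹ - (p4 + k)⁻¹) := by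
        ring
      rw [this, e2, e3, he]
      push_cast
      ring
    calc Complex.I * (((Real.log n : ℂ) - ∑ k ∈ Finset.range (n+1), (p1 + k)⁻¹)
        - ((Real.log n : ℂ) - ∑ k ∈ Finset.range (n+1), (p2 + k)⁻¹)
        - ((Real.log n : ℂ) - ∑ k ∈ Finset.range (n+1), (p3 + k)⁻¹)
        + ((Real.log n : ℂ) - ∑ k ∈ Finset.range (n+1), (p4 + k)⁻¹))
        = ∑ k ∈ Finset.range (n+1),
            Complex.I * ((p2 + k)⁻¹ + (p3 + k)⁻¹ - (p1 + k)⁻¹ - (p4 + k)⁻¹) := by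
          rw [← Finset.mul_sum]
          congr 1
          rw [Finset.sum_sub_distrib, Finset.sum_sub_distrib, Finset.sum_add_distrib]
          ring
      _ = ∑ k ∈ Finset.range (n+1), ((e k : ℝ) : ℂ) := Finset.sum_congr rfl fun k _ => hterm k
      _ = ((∑ k ∈ Finset.range (n+1), e k : ℝ) : ℂ) := by push_cast; rfl
  set L : ℂ := Complex.I * (Ψ p1 - Ψ p2 - Ψ p3 + Ψ p4) with hL
  have hXr : Tendsto (fun n : ℕ => ((∑ k ∈ Finset.range (n+1), e k : ℝ) : ℂ)) atTop (𝓝 L) :=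
    hXc.congr hkey
  have hre : Tendsto (fun n : ℕ => ∑ k ∈ Finset.range (n+1), e k) atTop (𝓝 L.re) := by
    have h5 := (Complex.continuous_re.tendsto _).comp hXr
    exact h5.congr fun n => Complex.ofReal_re _
  have him : L.im = 0 := by
    have h5 := (Complex.continuous_im.tendsto _).comp hXr
    have h7 : (Complex.im ∘ fun n : ℕ => ((∑ k ∈ Finset.range (n+1), e k : ℝ) : ℂ))
        = fun n : ℕ => (0:ℝ) := by
      funext n
      simp [Function.comp]
    rw [h7] at h5
    exact tendsto_nhds_unique h5 tendsto_const_nhds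
  have hlb : e 0 ≤ L.re := by
    refine ge_of_tendsto hre (Eventually.of_forall fun n => ?_)
    exact Finset.single_le_sum (f := e) (fun k _ => (hepos k).le)
      (Finset.mem_range.mpr (Nat.succ_pos n))
  refine ⟨L.re, lt_of_lt_of_le (hepos 0) hlb, ?_⟩
  exact Complex.ext (by simp) (by simp [him])
end

section
/- Fix σ < 1/2. The function t ↦ |X(σ + it)| is strictly monotonically increasing on (0, ∞), where X(s) = (5/π)^{1/2−s} Γ(1−s/2)/Γ((1+s)/2). -/
open Complex Filter Topology

lemma factor_le {p q u v : ℝ} (hpq : p ≤ q) (hq : 0 < q) (hu : 0 ≤ u) (huv : u ≤ v) :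
    (p + u^2)/(q + u^2) ≤ (p + v^2)/(q + v^2) := by
  rw [div_le_div_iff₀ (by positivity) (by positivity)]
  nlinarith [mul_self_le_mul_self hu huv, sq_nonneg u, sq_nonneg v]

lemma factor_lt {p q u v : ℝ} (hpq : p < q) (hq : 0 < q) (hu : 0 ≤ u) (huv : u < v) :
    (p + u^2)/(q + u^2) < (p + v^2)/(q + v^2) := by
  rw [div_lt_div_iff₀ (by positivity) (by positivity)]
  nlinarith [mul_self_lt_mul_self hu huv, sq_nonneg u, sq_nonneg v]

lemma Gamma_xy_ne (x y : ℝ) (hy : y ≠ 0) : Complex.Gamma (x + y*I) ≠ 0 := by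
  apply Complex.Gamma_ne_zero
  intro m h
  have := congrArg Complex.im h
  simp at this
  exact hy this

lemma normSq_gammaSeq (x y : ℝ) {n : ℕ} (hn : n ≠ 0) :
    Complex.normSq (Complex.GammaSeq (x + y*I) n) =
      ((n:ℝ) ^ x)^2 * (n.factorial : ℝ)^2 / ∏ j ∈ Finset.range (n+1), ((x+j)^2+y^2) := by
  have hn' : (0:ℝ) < n := by positivity
  rw [Complex.GammaSeq, map_div₀, map_mul, map_prod]
  congr 1
  · congr 1
    · rw [← Complex.sq_norm]
      congr 1
      rw [show ((n:ℂ)) = (((n:ℝ)):ℂ) by push_cast; ring,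
        Complex.norm_cpow_eq_rpow_re_of_pos hn']
      congr 1
      simp
    · rw [← Complex.sq_norm]
      simp [Complex.norm_natCast]
  · refine Finset.prod_congr rfl fun j _ => ?_
    simp [Complex.normSq_apply]
    ring

lemma ratio_eq (x₁ x₂ y : ℝ) (hy : y ≠ 0) {n : ℕ} (hn : n ≠ 0) :
    Complex.normSq (Complex.GammaSeq (x₁ + y*I) n) / Complex.normSq (Complex.GammaSeq (x₂ + y*I) n)
    = (((n:ℝ)^x₁)^2/((n:ℝ)^x₂)^2) *
        ∏ j ∈ Finset.range (n+1), (((x₂+j)^2+y^2)/((x₁+j)^2+y^2)) := by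
  have hn' : (0:ℝ) < n := by positivity
  have hA : (0:ℝ) < ∏ j ∈ Finset.range (n+1), ((x₁+j)^2+y^2) :=
    Finset.prod_pos fun j _ => by positivity
  have hB : (0:ℝ) < ∏ j ∈ Finset.range (n+1), ((x₂+j)^2+y^2) :=
    Finset.prod_pos fun j _ => by positivity
  have hp1 : (0:ℝ) < (n:ℝ)^x₁ := Real.rpow_pos_of_pos hn' _
  have hp2 : (0:ℝ) < (n:ℝ)^x₂ := Real.rpow_pos_of_pos hn' _
  have hf : (0:ℝ) < (n.factorial : ℝ) := by positivity
  rw [normSq_gammaSeq x₁ y hn, normSq_gammaSeq x₂ y hn, Finset.prod_div_distrib]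
  field_simp

lemma tendsto_ratio (x₁ x₂ y : ℝ) (hy : y ≠ 0) :
    Tendsto (fun n : ℕ => (((n:ℝ)^x₁)^2/((n:ℝ)^x₂)^2) *
        ∏ j ∈ Finset.range (n+1), (((x₂+j)^2+y^2)/((x₁+j)^2+y^2))) atTop
      (𝓝 (Complex.normSq (Complex.Gamma (x₁ + y*I)) / Complex.normSq (Complex.Gamma (x₂ + y*I)))) := by
  have h2 : Complex.normSq (Complex.Gamma (x₂ + y*I)) ≠ 0 := by
    simpa [Complex.normSq_eq_zero] using Gamma_xy_ne x₂ y hy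
  have t1 : Tendsto (fun n => Complex.normSq (Complex.GammaSeq (x₁ + y*I) n)) atTop
      (𝓝 (Complex.normSq (Complex.Gamma (x₁ + y*I)))) :=
    (Complex.continuous_normSq.tendsto _).comp (Complex.GammaSeq_tendsto_Gamma _)
  have t2 : Tendsto (fun n => Complex.normSq (Complex.GammaSeq (x₂ + y*I) n)) atTop
      (𝓝 (Complex.normSq (Complex.Gamma (x₂ + y*I)))) :=
    (Complex.continuous_normSq.tendsto _).comp (Complex.GammaSeq_tendsto_Gamma _)
  refine (t1.div t2 h2).congr' ?_
  filter_upwards [eventually_ne_atTop 0] with n hn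
  exact ratio_eq x₁ x₂ y hy hn

lemma key (a b : ℝ) (ha : 0 < a) (hba : b < a) (hab : 0 < a + b) :
    StrictMonoOn
      (fun y : ℝ => Complex.normSq (Complex.Gamma (a + y*I)) / Complex.normSq (Complex.Gamma (b + y*I)))
      (Set.Ioi 0) := by
  intro u hu v hv huv
  simp only [Set.mem_Ioi] at hu hv
  set R : ℝ → ℝ := fun y =>
    Complex.normSq (Complex.Gamma (a + y*I)) / Complex.normSq (Complex.Gamma (b + y*I)) with hRdef
  set f : ℝ → ℝ := fun y => (b^2+y^2)/(a^2+y^2) with hfdef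
  set g : ℕ → ℝ → ℝ := fun n y => (((n:ℝ)^a)^2/((n:ℝ)^b)^2) *
    ∏ j ∈ Finset.range n, ((b+((j:ℝ)+1))^2+y^2)/((a+((j:ℝ)+1))^2+y^2) with hgdef
  have hsq : ∀ c : ℝ, 0 ≤ c → (b+c)^2 ≤ (a+c)^2 := by
    intro c hc
    apply sq_le_sq' <;> nlinarith
  have hfpos : ∀ y : ℝ, 0 < y → 0 < f y := by
    intro y hy
    have h1 : (0:ℝ) < b^2+y^2 := by nlinarith [sq_nonneg b]
    have h2 : (0:ℝ) < a^2+y^2 := by nlinarith [sq_nonneg a]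
    exact div_pos h1 h2
  -- g n is the full product divided by f
  have hgt : ∀ y : ℝ, 0 < y → Tendsto (fun n => g n y) atTop (𝓝 (R y / f y)) := by
    intro y hy
    have hfy : f y ≠ 0 := (hfpos y hy).ne'
    refine ((tendsto_ratio a b y hy.ne').div_const (f y)).congr fun n => ?_
    rw [hgdef]
    simp only
    rw [Finset.prod_range_succ']
    have hrw : ∀ j : ℕ, ((b+((j+1:ℕ):ℝ))^2+y^2)/((a+((j+1:ℕ):ℝ))^2+y^2)
        = ((b+((j:ℝ)+1))^2+y^2)/((a+((j:ℝ)+1))^2+y^2) := by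
      intro j; push_cast; ring_nf
    rw [Finset.prod_congr rfl fun j _ => hrw j]
    have h0 : ((b+((0:ℕ):ℝ))^2+y^2)/((a+((0:ℕ):ℝ))^2+y^2) = f y := by
      simp [hfdef]
    rw [h0, ← mul_assoc, mul_div_assoc, div_self hfy, mul_one]
  have hgmono : ∀ n, g n u ≤ g n v := by
    intro n
    apply mul_le_mul_of_nonneg_left _ (by positivity)
    apply Finset.prod_le_prod
    · intro j _
      positivity
    · intro j _
      exact factor_le (hsq ((j:ℝ)+1) (by positivity))
        (pow_pos (show (0:ℝ) < a+((j:ℝ)+1) by positivity) 2) hu.le huv.le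
  have hle : R u / f u ≤ R v / f v :=
    le_of_tendsto_of_tendsto' (hgt u hu) (hgt v hv) hgmono
  have hRu : 0 < R u := by
    apply div_pos <;>
      exact Complex.normSq_pos.mpr (Gamma_xy_ne _ u hu.ne')
  have hflt : f u < f v := factor_lt (by nlinarith : b^2 < a^2) (by positivity) hu.le huv
  have hfu := hfpos u hu
  have hfv := hfpos v hv
  calc R u = f u * (R u / f u) := by field_simp
    _ < f v * (R u / f u) := by
        exact mul_lt_mul_of_pos_right hflt (div_pos hRu hfu)
    _ ≤ f v * (R v / f v) := mul_le_mul_of_nonneg_left hle hfv.le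
    _ = R v := by field_simp

theorem stmt_7 (σ : ℝ) (hσ : σ < 1/2) :
    StrictMonoOn (fun t : ℝ => ‖X (σ + t * I)‖) (Set.Ioi 0) := by
  set a : ℝ := 1 - σ/2 with hadef
  set b : ℝ := (1+σ)/2 with hbdef
  have hkey := key a b (by rw [hadef]; linarith) (by rw [hadef, hbdef]; linarith)
    (by rw [hadef, hbdef]; linarith)
  have hc : (0:ℝ) < (5/Real.pi : ℝ) ^ ((1:ℝ)/2 - σ) :=
    Real.rpow_pos_of_pos (by positivity) _
  have habs : ∀ t : ℝ, ‖X (σ + t*I)‖ =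
      ((5/Real.pi : ℝ) ^ ((1:ℝ)/2 - σ)) *
        Real.sqrt (Complex.normSq (Complex.Gamma (a + (t/2)*I)) /
          Complex.normSq (Complex.Gamma (b + (t/2)*I))) := by
    intro t
    have e1 : (1 : ℂ) - (σ + t*I)/2 = (starRingEnd ℂ) ((a:ℝ) + (t/2 : ℝ)*I) := by
      rw [map_add, map_mul, Complex.conj_ofReal, Complex.conj_ofReal, Complex.conj_I, hadef]
      push_cast
      ring
    have e2 : (1 + (σ + t*I))/2 = ((b:ℝ) + (t/2 : ℝ)*I) := by
      rw [hbdef]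
      push_cast
      ring
    have e3 : ‖((5 : ℂ) / Real.pi) ^ ((1 : ℂ)/2 - (σ + t*I))‖
        = (5/Real.pi : ℝ) ^ ((1:ℝ)/2 - σ) := by
      rw [show ((5:ℂ)/Real.pi) = (((5/Real.pi : ℝ)):ℂ) by push_cast; ring]
      rw [Complex.norm_cpow_eq_rpow_re_of_pos (by positivity)]
      congr 1
      simp
    rw [X, norm_div, norm_mul, e1, e2, e3, Complex.Gamma_conj, Complex.norm_conj]
    rw [mul_div_assoc]
    congr 1
    rw [Real.sqrt_div (Complex.normSq_nonneg _), Complex.norm_def, Complex.norm_def]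
    push_cast
    ring_nf
  intro t₁ ht₁ t₂ ht₂ h12
  simp only [Set.mem_Ioi] at ht₁ ht₂
  show ‖X (↑σ + ↑t₁ * I)‖ < ‖X (↑σ + ↑t₂ * I)‖
  rw [habs t₁, habs t₂]
  apply mul_lt_mul_of_pos_left _ hc
  apply Real.sqrt_lt_sqrt
  · apply div_nonneg <;> exact Complex.normSq_nonneg _
  · have := hkey (a := t₁/2) (b := t₂/2) (Set.mem_Ioi.mpr (by linarith))
      (Set.mem_Ioi.mpr (by linarith)) (by linarith)
    simp only at this
    push_cast at this ⊢
    exact this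
end

section
/- Fix σ > 1/2. The function t ↦ |X(σ + it)| is strictly monotonically decreasing on (0, ∞), where X(s) = (5/π)^{1/2−s} Γ(1−s/2)/Γ((1+s)/2). -/
open Complex Filter Topology

lemma abs_aux (x u : ℝ) : (‖(x:ℂ) + u*I‖)^2 = x^2 + u^2 := by
  rw [Complex.sq_norm, Complex.normSq_apply]
  simp
  ring

lemma term_le (a b u v : ℝ) (hab : a < b) (hs : 0 < a + b) (hu : 0 ≤ u) (huv : u ≤ v) :
    ‖(a:ℂ) + u*I‖ * ‖(b:ℂ) + v*I‖ ≤
      ‖(a:ℂ) + v*I‖ * ‖(b:ℂ) + u*I‖ := by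
  have h2 : (‖(a:ℂ) + u*I‖ * ‖(b:ℂ) + v*I‖)^2 ≤
      (‖(a:ℂ) + v*I‖ * ‖(b:ℂ) + u*I‖)^2 := by
    rw [mul_pow, mul_pow, abs_aux, abs_aux, abs_aux, abs_aux]
    nlinarith [mul_nonneg (mul_nonneg (mul_nonneg (sub_nonneg.2 hab.le) hs.le)
      (sub_nonneg.2 huv)) (by linarith : (0:ℝ) ≤ v + u)]
  exact (pow_le_pow_iff_left₀ (by positivity) (by positivity) two_ne_zero).1 h2

lemma term_lt (a b u v : ℝ) (hab : a < b) (hs : 0 < a + b) (hu : 0 ≤ u) (huv : u < v) :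
    ‖(a:ℂ) + u*I‖ * ‖(b:ℂ) + v*I‖ <
      ‖(a:ℂ) + v*I‖ * ‖(b:ℂ) + u*I‖ := by
  have h2 : (‖(a:ℂ) + u*I‖ * ‖(b:ℂ) + v*I‖)^2 <
      (‖(a:ℂ) + v*I‖ * ‖(b:ℂ) + u*I‖)^2 := by
    rw [mul_pow, mul_pow, abs_aux, abs_aux, abs_aux, abs_aux]
    nlinarith [mul_pos (mul_pos (mul_pos (sub_pos.2 hab) hs)
      (sub_pos.2 huv)) (by linarith : (0:ℝ) < v + u)]
  exact (pow_lt_pow_iff_left₀ (by positivity) (by positivity) two_ne_zero).1 h2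

lemma abs_ne_zero_aux (x u : ℝ) (hu : u ≠ 0) : ((x:ℂ) + u*I) ≠ 0 := by
  intro h
  have := congrArg Complex.im h
  simp at this
  exact hu this

lemma Gamma_abs_pos (x u : ℝ) (hu : u ≠ 0) :
    0 < ‖Complex.Gamma ((x:ℂ) + u*I)‖ := by
  rw [norm_pos_iff]
  apply Complex.Gamma_ne_zero
  intro m h
  have := congrArg Complex.im h
  simp at this
  exact hu this

lemma abs_GammaSeq (z : ℂ) (n : ℕ) (hn : 1 ≤ n) :
    ‖Complex.GammaSeq z n‖ =
      (n : ℝ) ^ z.re * (Nat.factorial n : ℝ) / ∏ j ∈ Finset.range (n + 1), ‖z + j‖ := by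
  rw [Complex.GammaSeq, norm_div, norm_mul, norm_prod]
  congr 2
  · rw [show ((n:ℂ)) = (((n:ℝ)):ℂ) by push_cast; ring,
      Complex.norm_cpow_eq_rpow_re_of_pos (by exact_mod_cast Nat.pos_of_ne_zero (by omega))]
  · simp

/-- Key monotonicity inequality for quotients of Gamma moduli. -/
lemma key_s8 (a b u v : ℝ) (hab : a < b) (hs : 0 < a + b) (hu : 0 < u) (huv : u < v) :
    ‖Complex.Gamma ((a:ℂ) + v*I)‖ * ‖Complex.Gamma ((b:ℂ) + u*I)‖ <
      ‖Complex.Gamma ((a:ℂ) + u*I)‖ * ‖Complex.Gamma ((b:ℂ) + v*I)‖ := by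
  set f : ℕ → ℝ := fun j => ‖(a:ℂ) + j + u*I‖ * ‖(b:ℂ) + j + v*I‖ with hf
  set g : ℕ → ℝ := fun j => ‖(a:ℂ) + j + v*I‖ * ‖(b:ℂ) + j + u*I‖ with hg
  have hshift : ∀ (x : ℝ) (w : ℝ) (j : ℕ), ((x:ℂ) + j + w*I) = (((x + j : ℝ)):ℂ) + w*I := by
    intro x w j; push_cast; ring
  have hfg : ∀ j : ℕ, f j ≤ g j := by
    intro j
    simp only [hf, hg, hshift]
    exact term_le _ _ _ _ (by linarith) (by have hj : (0:ℝ) ≤ j := Nat.cast_nonneg j; linarith)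
      hu.le huv.le
  have hfg0 : f 0 < g 0 := by
    simp only [hf, hg, hshift]
    exact term_lt _ _ _ _ (by linarith) (by norm_num; linarith) hu.le huv
  have hf_pos : ∀ j : ℕ, 0 < f j := by
    intro j
    simp only [hf, hshift]
    exact mul_pos (norm_pos_iff.mpr (abs_ne_zero_aux _ _ hu.ne'))
      (norm_pos_iff.mpr (abs_ne_zero_aux _ _ (by linarith : (0:ℝ) < v).ne'))
  have hg_pos : ∀ j : ℕ, 0 < g j := by
    intro j
    simp only [hg, hshift]
    exact mul_pos (norm_pos_iff.mpr (abs_ne_zero_aux _ _ (by linarith : (0:ℝ) < v).ne'))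
      (norm_pos_iff.mpr (abs_ne_zero_aux _ _ hu.ne'))
  set c : ℝ := f 0 / g 0 with hc
  have hc1 : c < 1 := (div_lt_one (hg_pos 0)).2 hfg0
  have hc0 : 0 < c := div_pos (hf_pos 0) (hg_pos 0)
  -- product inequality
  have hprod : ∀ n : ℕ, (∏ j ∈ Finset.range (n+1), f j) ≤ c * ∏ j ∈ Finset.range (n+1), g j := by
    intro n
    rw [Finset.prod_range_succ', Finset.prod_range_succ' (fun j => g j)]
    have h1 : (∏ j ∈ Finset.range n, f (j+1)) ≤ ∏ j ∈ Finset.range n, g (j+1) :=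
      Finset.prod_le_prod (fun j _ => (hf_pos _).le) (fun j _ => hfg _)
    have h2 : f 0 = c * g 0 := by
      rw [hc, div_mul_cancel₀]
      exact (hg_pos 0).ne'
    calc (∏ j ∈ Finset.range n, f (j+1)) * f 0
        ≤ (∏ j ∈ Finset.range n, g (j+1)) * (c * g 0) := by
          rw [← h2]
          exact mul_le_mul_of_nonneg_right h1 (hf_pos 0).le
      _ = c * ((∏ j ∈ Finset.range n, g (j+1)) * g 0) := by ring
  -- eventual inequality on GammaSeq
  have hev : ∀ n : ℕ, 1 ≤ n →
      ‖Complex.GammaSeq ((a:ℂ) + v*I) n‖ *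
        ‖Complex.GammaSeq ((b:ℂ) + u*I) n‖ ≤
      c * (‖Complex.GammaSeq ((a:ℂ) + u*I) n‖ *
        ‖Complex.GammaSeq ((b:ℂ) + v*I) n‖) := by
    intro n hn
    rw [abs_GammaSeq _ _ hn, abs_GammaSeq _ _ hn, abs_GammaSeq _ _ hn, abs_GammaSeq _ _ hn]
    have hre1 : ((a:ℂ) + v*I).re = a := by simp
    have hre2 : ((a:ℂ) + u*I).re = a := by simp
    have hre3 : ((b:ℂ) + v*I).re = b := by simp
    have hre4 : ((b:ℂ) + u*I).re = b := by simp
    rw [hre1, hre2, hre3, hre4]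
    have hPav : ∀ z : ℂ, z ≠ 0 → True := fun _ _ => trivial
    set Pau := ∏ j ∈ Finset.range (n+1), ‖(a:ℂ) + u*I + j‖ with hPau
    set Pav := ∏ j ∈ Finset.range (n+1), ‖(a:ℂ) + v*I + j‖ with hPavd
    set Pbu := ∏ j ∈ Finset.range (n+1), ‖(b:ℂ) + u*I + j‖ with hPbu
    set Pbv := ∏ j ∈ Finset.range (n+1), ‖(b:ℂ) + v*I + j‖ with hPbv
    have hcomm : ∀ (x w : ℝ) (j : ℕ), ((x:ℂ) + w*I + j) = ((x:ℂ) + j + w*I) := by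
      intro x w j; ring
    have hPauPbv : Pau * Pbv = ∏ j ∈ Finset.range (n+1), f j := by
      rw [hPau, hPbv, ← Finset.prod_mul_distrib]
      exact Finset.prod_congr rfl fun j _ => by rw [hcomm, hcomm]
    have hPavPbu : Pav * Pbu = ∏ j ∈ Finset.range (n+1), g j := by
      rw [hPavd, hPbu, ← Finset.prod_mul_distrib]
      exact Finset.prod_congr rfl fun j _ => by rw [hcomm, hcomm]
    have hPau_pos : 0 < Pau := Finset.prod_pos fun j _ => by
      rw [hcomm, hshift]; exact norm_pos_iff.mpr (abs_ne_zero_aux _ _ hu.ne')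
    have hPav_pos : 0 < Pav := Finset.prod_pos fun j _ => by
      rw [hcomm, hshift]; exact norm_pos_iff.mpr (abs_ne_zero_aux _ _ (by linarith : (0:ℝ) < v).ne')
    have hPbu_pos : 0 < Pbu := Finset.prod_pos fun j _ => by
      rw [hcomm, hshift]; exact norm_pos_iff.mpr (abs_ne_zero_aux _ _ hu.ne')
    have hPbv_pos : 0 < Pbv := Finset.prod_pos fun j _ => by
      rw [hcomm, hshift]; exact norm_pos_iff.mpr (abs_ne_zero_aux _ _ (by linarith : (0:ℝ) < v).ne')
    have hn0 : (0:ℝ) < (n:ℝ) := by exact_mod_cast Nat.pos_of_ne_zero (by omega)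
    have hA : (0:ℝ) < (n:ℝ) ^ a * (Nat.factorial n : ℝ) * ((n:ℝ) ^ b * (Nat.factorial n : ℝ)) := by positivity
    have hPP : Pau * Pbv ≤ c * (Pav * Pbu) := by
      rw [hPauPbv, hPavPbu]; exact hprod n
    rw [div_mul_div_comm, div_mul_div_comm, ← mul_div_assoc,
      div_le_div_iff₀ (mul_pos hPav_pos hPbu_pos) (mul_pos hPau_pos hPbv_pos)]
    nlinarith [mul_le_mul_of_nonneg_left hPP hA.le, hA, mul_pos hPau_pos hPbv_pos,
      mul_pos hPav_pos hPbu_pos]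
  -- pass to the limit
  have hab1 : Tendsto (fun n => ‖Complex.GammaSeq ((a:ℂ) + v*I) n‖ *
      ‖Complex.GammaSeq ((b:ℂ) + u*I) n‖) atTop
      (nhds (‖Complex.Gamma ((a:ℂ) + v*I)‖ *
        ‖Complex.Gamma ((b:ℂ) + u*I)‖)) :=
    ((continuous_norm.tendsto _).comp (Complex.GammaSeq_tendsto_Gamma _)).mul
      ((continuous_norm.tendsto _).comp (Complex.GammaSeq_tendsto_Gamma _))
  have hab2 : Tendsto (fun n => c * (‖Complex.GammaSeq ((a:ℂ) + u*I) n‖ *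
      ‖Complex.GammaSeq ((b:ℂ) + v*I) n‖)) atTop
      (nhds (c * (‖Complex.Gamma ((a:ℂ) + u*I)‖ *
        ‖Complex.Gamma ((b:ℂ) + v*I)‖))) :=
    tendsto_const_nhds.mul
      (((continuous_norm.tendsto _).comp (Complex.GammaSeq_tendsto_Gamma _)).mul
        ((continuous_norm.tendsto _).comp (Complex.GammaSeq_tendsto_Gamma _)))
  have hlim : ‖Complex.Gamma ((a:ℂ) + v*I)‖ *
      ‖Complex.Gamma ((b:ℂ) + u*I)‖ ≤
      c * (‖Complex.Gamma ((a:ℂ) + u*I)‖ *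
        ‖Complex.Gamma ((b:ℂ) + v*I)‖) :=
    le_of_tendsto_of_tendsto hab1 hab2 ((eventually_ge_atTop 1).mono fun n hn => hev n hn)
  have hM : 0 < ‖Complex.Gamma ((a:ℂ) + u*I)‖ *
      ‖Complex.Gamma ((b:ℂ) + v*I)‖ :=
    mul_pos (Gamma_abs_pos _ _ hu.ne') (Gamma_abs_pos _ _ (by linarith : (0:ℝ) < v).ne')
  calc ‖Complex.Gamma ((a:ℂ) + v*I)‖ * ‖Complex.Gamma ((b:ℂ) + u*I)‖
      ≤ c * (‖Complex.Gamma ((a:ℂ) + u*I)‖ *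
        ‖Complex.Gamma ((b:ℂ) + v*I)‖) := hlim
    _ < 1 * (‖Complex.Gamma ((a:ℂ) + u*I)‖ *
        ‖Complex.Gamma ((b:ℂ) + v*I)‖) := by
        exact mul_lt_mul_of_pos_right hc1 hM
    _ = _ := one_mul _

lemma absX_eq (σ t : ℝ) :
    ‖X (σ + t * I)‖ =
      (5 / Real.pi) ^ ((1:ℝ)/2 - σ) *
        ‖Complex.Gamma (((1 - σ/2 : ℝ):ℂ) + (t/2 : ℝ)*I)‖ /
        ‖Complex.Gamma ((((1+σ)/2 : ℝ):ℂ) + (t/2 : ℝ)*I)‖ := by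
  rw [X, norm_div, norm_mul]
  congr 1
  congr 1
  · rw [show ((5:ℂ)/Real.pi) = (((5/Real.pi : ℝ)):ℂ) by push_cast; ring,
      Complex.norm_cpow_eq_rpow_re_of_pos (by positivity)]
    congr 1
    simp
  · rw [show (1 - (↑σ + ↑t * I)/2 : ℂ) =
        (starRingEnd ℂ) (((1 - σ/2 : ℝ):ℂ) + (t/2 : ℝ)*I) by
      rw [map_add, map_mul, Complex.conj_I, Complex.conj_ofReal, Complex.conj_ofReal]
      push_cast; ring]
    rw [Complex.Gamma_conj, Complex.norm_conj]
  · congr 1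
    push_cast
    ring

theorem stmt_8 (σ : ℝ) (hσ : σ > 1/2) :
    StrictAntiOn (fun t : ℝ => ‖X (σ + t * I)‖) (Set.Ioi 0) := by
  intro t₁ ht₁ t₂ ht₂ h12
  simp only [Set.mem_Ioi] at ht₁ ht₂
  simp only [absX_eq]
  set a : ℝ := 1 - σ/2 with ha
  set b : ℝ := (1+σ)/2 with hb
  have hab : a < b := by rw [ha, hb]; linarith
  have hs : 0 < a + b := by rw [ha, hb]; linarith
  have hkey := key_s8 a b (t₁/2) (t₂/2) hab hs (by linarith) (by linarith)
  have hB1 : 0 < ‖Complex.Gamma ((b:ℂ) + (t₁/2 : ℝ)*I)‖ :=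
    Gamma_abs_pos _ _ (by linarith : (0:ℝ) < t₁/2).ne'
  have hB2 : 0 < ‖Complex.Gamma ((b:ℂ) + (t₂/2 : ℝ)*I)‖ :=
    Gamma_abs_pos _ _ (by linarith : (0:ℝ) < t₂/2).ne'
  have hK : (0:ℝ) < (5 / Real.pi) ^ ((1:ℝ)/2 - σ) := by positivity
  rw [div_lt_div_iff₀ hB2 hB1]
  nlinarith [hkey, hK, hB1, hB2,
    norm_nonneg (Complex.Gamma ((a:ℂ) + (t₂/2:ℝ)*I)),
    norm_nonneg (Complex.Gamma ((a:ℂ) + (t₁/2:ℝ)*I))]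
end

section
/- For σ fixed with σ < 1/2, the set {t > 0 : |X(σ + it)| = 1}, where X(s) = (5/π)^{1/2−s} Γ(1−s/2)/Γ((1+s)/2), contains at most one element. -/
open Complex Filter Topology

lemma aux_abs_sq (x y : ℝ) (j : ℕ) :
    (‖(x:ℂ) + y*I + j‖)^2 = (x+j)^2 + y^2 := by
  rw [Complex.sq_norm, Complex.normSq_apply]
  simp
  ring

lemma aux_abs_pos (x y : ℝ) (hy : y ≠ 0) (j : ℕ) :
    0 < ‖(x:ℂ) + y*I + j‖ := by
  rw [norm_pos_iff]
  intro h
  apply hy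
  have := congrArg Complex.im h
  simpa using this

lemma aux_ne_zero (x y : ℝ) (hy : y ≠ 0) : ((x:ℂ) + y*I) ≠ 0 := by
  intro h
  apply hy
  have := congrArg Complex.im h
  simpa using this

lemma aux_gamma_ne (x y : ℝ) (hy : y ≠ 0) :
    Complex.Gamma ((x:ℂ) + y*I) ≠ 0 := by
  apply Complex.Gamma_ne_zero
  intro m h
  apply hy
  have := congrArg Complex.im h
  simpa using this

lemma aux_absGammaSeq (x y : ℝ) (n : ℕ) :
    ‖Complex.GammaSeq ((x:ℂ) + y*I) (n+1)‖ =
      ((n+1:ℕ):ℝ) ^ x * ((Nat.factorial (n+1)) : ℝ) /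
        ∏ j ∈ Finset.range (n+2), ‖(x:ℂ) + y*I + j‖ := by
  rw [Complex.GammaSeq, norm_div, norm_mul, Complex.norm_prod]
  congr 2
  have h1 : ((n+1:ℕ):ℂ) = (((n+1:ℕ):ℝ):ℂ) := by push_cast; ring
  rw [h1, Complex.norm_cpow_eq_rpow_re_of_pos (by positivity)]
  · norm_num
  · simp

lemma key_s18 (a b y1 y2 : ℝ) (hab : b < a) (hsum : 0 < a + b) (hy1 : 0 < y1) (hy : y1 < y2) :
    ‖Complex.Gamma ((b:ℂ) + y2*I)‖ * ‖Complex.Gamma ((a:ℂ) + y1*I)‖ <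
    ‖Complex.Gamma ((b:ℂ) + y1*I)‖ * ‖Complex.Gamma ((a:ℂ) + y2*I)‖ := by
  have hy2 : 0 < y2 := hy1.trans hy
  have hy1' : y1 ≠ 0 := ne_of_gt hy1
  have hy2' : y2 ≠ 0 := ne_of_gt hy2
  set w : ℕ → ℝ := fun j => ‖(b:ℂ) + y2*I + j‖ * ‖(a:ℂ) + y1*I + j‖ with hw
  set v : ℕ → ℝ := fun j => ‖(b:ℂ) + y1*I + j‖ * ‖(a:ℂ) + y2*I + j‖ with hv
  have hwpos : ∀ j, 0 < w j := fun j =>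
    mul_pos (aux_abs_pos b y2 hy2' j) (aux_abs_pos a y1 hy1' j)
  have hvpos : ∀ j, 0 < v j := fun j =>
    mul_pos (aux_abs_pos b y1 hy1' j) (aux_abs_pos a y2 hy2' j)
  have hysq : y1^2 < y2^2 := by nlinarith
  have hsq : ∀ j : ℕ, (v j)^2 ≤ (w j)^2 := by
    intro j
    have e1 := aux_abs_sq b y1 j
    have e2 := aux_abs_sq a y2 j
    have e3 := aux_abs_sq b y2 j
    have e4 := aux_abs_sq a y1 j
    have hjn : (0:ℝ) ≤ (j:ℝ) := Nat.cast_nonneg j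
    have hfac : (0:ℝ) ≤ (a - b) * (a + b + 2*(j:ℝ)) := by nlinarith
    rw [hv, hw]
    simp only [mul_pow]
    rw [e1, e2, e3, e4]
    nlinarith [mul_nonneg hfac (le_of_lt (sub_pos.mpr hysq))]
  have hvw : ∀ j, v j ≤ w j := fun j =>
    le_of_pow_le_pow_left₀ (by norm_num) (le_of_lt (hwpos j)) (hsq j)
  have hvw0 : v 0 < w 0 := by
    have hsq0 : (v 0)^2 < (w 0)^2 := by
      have e1 := aux_abs_sq b y1 0
      have e2 := aux_abs_sq a y2 0
      have e3 := aux_abs_sq b y2 0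
      have e4 := aux_abs_sq a y1 0
      have hfac : (0:ℝ) < (a - b) * (a + b + 2*((0:ℕ):ℝ)) := by
        push_cast; nlinarith
      rw [hv, hw]
      simp only [mul_pow]
      rw [e1, e2, e3, e4]
      nlinarith [mul_pos hfac (sub_pos.mpr hysq)]
    exact lt_of_pow_lt_pow_left₀ 2 (le_of_lt (hwpos 0)) hsq0
  set r0 : ℝ := v 0 / w 0 with hr0
  have hr0pos : 0 < r0 := div_pos (hvpos 0) (hwpos 0)
  have hr0lt : r0 < 1 := (div_lt_one (hwpos 0)).mpr hvw0
  -- the per-n bound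
  have bound : ∀ n : ℕ,
      ‖Complex.GammaSeq ((b:ℂ) + y2*I) n‖ *
        ‖Complex.GammaSeq ((a:ℂ) + y1*I) n‖ ≤
      r0 * (‖Complex.GammaSeq ((b:ℂ) + y1*I) n‖ *
        ‖Complex.GammaSeq ((a:ℂ) + y2*I) n‖) := by
    intro n
    match n with
    | 0 =>
      have hz : Complex.GammaSeq ((b:ℂ) + y2*I) 0 = 0 := by
        rw [Complex.GammaSeq]
        simp [Complex.zero_cpow (aux_ne_zero b y2 hy2')]
      rw [hz]
      simp only [norm_zero, zero_mul]
      positivity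
    | (n+1) =>
      rw [aux_absGammaSeq, aux_absGammaSeq, aux_absGammaSeq, aux_absGammaSeq]
      set N : ℝ := ((n+1:ℕ):ℝ) with hN
      set F : ℝ := ((Nat.factorial (n+1)) : ℝ) with hF
      have hNpos : 0 < N := by rw [hN]; positivity
      have hFpos : 0 < F := by rw [hF]; exact_mod_cast Nat.factorial_pos _
      have hK : 0 < N ^ b * F * (N ^ a * F) := by positivity
      have hWb : 0 < ∏ j ∈ Finset.range (n+2), ‖(b:ℂ) + y2*I + j‖ :=
        Finset.prod_pos fun j _ => aux_abs_pos b y2 hy2' j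
      have hWa : 0 < ∏ j ∈ Finset.range (n+2), ‖(a:ℂ) + y1*I + j‖ :=
        Finset.prod_pos fun j _ => aux_abs_pos a y1 hy1' j
      have hVb : 0 < ∏ j ∈ Finset.range (n+2), ‖(b:ℂ) + y1*I + j‖ :=
        Finset.prod_pos fun j _ => aux_abs_pos b y1 hy1' j
      have hVa : 0 < ∏ j ∈ Finset.range (n+2), ‖(a:ℂ) + y2*I + j‖ :=
        Finset.prod_pos fun j _ => aux_abs_pos a y2 hy2' j
      rw [div_mul_div_comm, div_mul_div_comm, mul_div_assoc', div_le_div_iff₀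
        (mul_pos hWb hWa) (mul_pos hVb hVa)]
      have hprodW : (∏ j ∈ Finset.range (n+2), ‖(b:ℂ) + y2*I + j‖) *
          (∏ j ∈ Finset.range (n+2), ‖(a:ℂ) + y1*I + j‖) =
          ∏ j ∈ Finset.range (n+2), w j := by
        rw [← Finset.prod_mul_distrib]
      have hprodV : (∏ j ∈ Finset.range (n+2), ‖(b:ℂ) + y1*I + j‖) *
          (∏ j ∈ Finset.range (n+2), ‖(a:ℂ) + y2*I + j‖) =
          ∏ j ∈ Finset.range (n+2), v j := by
        rw [← Finset.prod_mul_distrib]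
      have hmain : ∏ j ∈ Finset.range (n+2), v j ≤ r0 * ∏ j ∈ Finset.range (n+2), w j := by
        rw [Finset.prod_range_succ' v, Finset.prod_range_succ' w]
        have h1 : ∏ j ∈ Finset.range (n+1), v (j+1) ≤ ∏ j ∈ Finset.range (n+1), w (j+1) :=
          Finset.prod_le_prod (fun j _ => le_of_lt (hvpos (j+1))) (fun j _ => hvw (j+1))
        have h2 : v 0 = r0 * w 0 := by
          rw [hr0, div_mul_cancel₀ _ (ne_of_gt (hwpos 0))]
        rw [h2]
        have h3 : (0:ℝ) ≤ r0 * w 0 := le_of_lt (mul_pos hr0pos (hwpos 0))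
        calc (∏ j ∈ Finset.range (n+1), v (j+1)) * (r0 * w 0)
            ≤ (∏ j ∈ Finset.range (n+1), w (j+1)) * (r0 * w 0) :=
              mul_le_mul_of_nonneg_right h1 h3
          _ = r0 * ((∏ j ∈ Finset.range (n+1), w (j+1)) * w 0) := by ring
      calc N ^ b * F * (N ^ a * F) *
            ((∏ j ∈ Finset.range (n+2), ‖(b:ℂ) + y1*I + j‖) *
             (∏ j ∈ Finset.range (n+2), ‖(a:ℂ) + y2*I + j‖))
          = N ^ b * F * (N ^ a * F) * ∏ j ∈ Finset.range (n+2), v j := by rw [hprodV]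
        _ ≤ N ^ b * F * (N ^ a * F) * (r0 * ∏ j ∈ Finset.range (n+2), w j) :=
            mul_le_mul_of_nonneg_left hmain (le_of_lt hK)
        _ = r0 * (N ^ b * F * (N ^ a * F)) *
            ((∏ j ∈ Finset.range (n+2), ‖(b:ℂ) + y2*I + j‖) *
             (∏ j ∈ Finset.range (n+2), ‖(a:ℂ) + y1*I + j‖)) := by
            rw [hprodW]; ring
  -- pass to the limit
  have hP : Tendsto (fun n => ‖Complex.GammaSeq ((b:ℂ) + y2*I) n‖ *
      ‖Complex.GammaSeq ((a:ℂ) + y1*I) n‖) atTop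
      (𝓝 (‖Complex.Gamma ((b:ℂ) + y2*I)‖ *
        ‖Complex.Gamma ((a:ℂ) + y1*I)‖)) := by
    have := ((Complex.GammaSeq_tendsto_Gamma ((b:ℂ) + y2*I)).norm).mul
      ((Complex.GammaSeq_tendsto_Gamma ((a:ℂ) + y1*I)).norm)
    exact this
  have hQ : Tendsto (fun n => r0 * (‖Complex.GammaSeq ((b:ℂ) + y1*I) n‖ *
      ‖Complex.GammaSeq ((a:ℂ) + y2*I) n‖)) atTop
      (𝓝 (r0 * (‖Complex.Gamma ((b:ℂ) + y1*I)‖ *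
        ‖Complex.Gamma ((a:ℂ) + y2*I)‖))) := by
    have := ((Complex.GammaSeq_tendsto_Gamma ((b:ℂ) + y1*I)).norm).mul
      ((Complex.GammaSeq_tendsto_Gamma ((a:ℂ) + y2*I)).norm)
    exact this.const_mul r0
  have hle := le_of_tendsto_of_tendsto' hP hQ bound
  have hRpos : 0 < ‖Complex.Gamma ((b:ℂ) + y1*I)‖ *
      ‖Complex.Gamma ((a:ℂ) + y2*I)‖ := by
    apply mul_pos <;> rw [norm_pos_iff]
    · exact aux_gamma_ne b y1 hy1'
    · exact aux_gamma_ne a y2 hy2'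
  calc ‖Complex.Gamma ((b:ℂ) + y2*I)‖ * ‖Complex.Gamma ((a:ℂ) + y1*I)‖
      ≤ r0 * (‖Complex.Gamma ((b:ℂ) + y1*I)‖ *
        ‖Complex.Gamma ((a:ℂ) + y2*I)‖) := hle
    _ < 1 * (‖Complex.Gamma ((b:ℂ) + y1*I)‖ *
        ‖Complex.Gamma ((a:ℂ) + y2*I)‖) := by
        exact mul_lt_mul_of_pos_right hr0lt hRpos
    _ = _ := one_mul _

lemma absX (σ t : ℝ) :
    ‖X (σ + t * I)‖ =
      (5/Real.pi) ^ ((1:ℝ)/2 - σ) *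
        ‖Complex.Gamma (((1 - σ/2 : ℝ):ℂ) + (t/2:ℝ)*I)‖ /
        ‖Complex.Gamma ((((1+σ)/2 : ℝ):ℂ) + (t/2:ℝ)*I)‖ := by
  rw [X, norm_div, norm_mul]
  congr 1
  congr 1
  · have h5 : ((5:ℂ) / Real.pi) = (((5/Real.pi : ℝ)):ℂ) := by push_cast; ring
    rw [h5, Complex.norm_cpow_eq_rpow_re_of_pos (by positivity)]
    congr 1
    simp
  · have : (1 : ℂ) - ((σ:ℂ) + t*I)/2 =
        (starRingEnd ℂ) (((1 - σ/2 : ℝ):ℂ) + (t/2:ℝ)*I) := by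
      rw [map_add, map_mul, Complex.conj_ofReal, Complex.conj_ofReal, Complex.conj_I]
      push_cast
      ring
    rw [this, Complex.Gamma_conj, Complex.norm_conj]
  · congr 2
    push_cast
    ring

theorem stmt_18 (σ : ℝ) (hσ : σ < 1/2) :
    {t : ℝ | 0 < t ∧ ‖X (σ + t * I)‖ = 1}.Subsingleton := by
  set a : ℝ := 1 - σ/2 with ha
  set b : ℝ := (1+σ)/2 with hb
  have hab : b < a := by rw [ha, hb]; linarith
  have hsum : 0 < a + b := by rw [ha, hb]; linarith
  set C : ℝ := (5/Real.pi) ^ ((1:ℝ)/2 - σ) with hC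
  have hCpos : 0 < C := by rw [hC]; positivity
  have hmem : ∀ t : ℝ, 0 < t → ‖X (σ + t * I)‖ = 1 →
      ‖Complex.Gamma ((b:ℂ) + (t/2:ℝ)*I)‖ =
        C * ‖Complex.Gamma ((a:ℂ) + (t/2:ℝ)*I)‖ := by
    intro t ht h1
    rw [absX] at h1
    have hne : ‖Complex.Gamma ((((1+σ)/2 : ℝ):ℂ) + (t/2:ℝ)*I)‖ ≠ 0 := by
      rw [norm_ne_zero_iff]
      exact aux_gamma_ne _ _ (by positivity)
    rw [div_eq_one_iff_eq hne] at h1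
    rw [hb, ha, hC]
    exact h1.symm
  have noTwo : ∀ t1 t2 : ℝ,
      t1 ∈ {t : ℝ | 0 < t ∧ ‖X (σ + t * I)‖ = 1} →
      t2 ∈ {t : ℝ | 0 < t ∧ ‖X (σ + t * I)‖ = 1} →
      t1 < t2 → False := by
    intro t1 t2 h1 h2 hlt
    obtain ⟨ht1, hX1⟩ := h1
    obtain ⟨ht2, hX2⟩ := h2
    have e1 := hmem t1 ht1 hX1
    have e2 := hmem t2 ht2 hX2
    have hk := key_s18 a b (t1/2) (t2/2) hab hsum (by linarith) (by linarith)
    rw [e1, e2] at hk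
    nlinarith [hk, mul_pos hCpos hCpos]
  intro t1 h1 t2 h2
  rcases lt_trichotomy t1 t2 with h | h | h
  · exact absurd (noTwo t1 t2 h1 h2 h) (not_false)
  · exact h
  · exact absurd (noTwo t2 t1 h2 h1 h) (not_false)
end
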